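/- arXiv:1806.07762 — 6 statements merged into one kernel-verified Lean document; each statement's English description precedes it below -/
import Mathlib

section
/- Let m be a positive integer. Then λ(2m) = (-1)^{m-1} ( π^{2m}/(4·(2m)!) + Σ_{k=1}^{m-1} (-1)^{m-k} · π^{2k}/((2k+1)!) · λ(2m-2k) ). -/
open Real Finset

/-- The Dirichlet lambda function at a natural-number argument `j`:
`λ(j) = ∑_{n=0}^∞ 1/(2n+1)^j`. -/
noncomputable def dirichletLambda (j : ℕ) : ℝ := ∑' n : ℕ, 1 / (2 * (n : ℝ) + 1) ^ j

namespace LambdaRecAux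

open Nat

open PowerSeries in
lemma bernoulli_poly_eval_half_odd {n : ℕ} (hn : Odd n) :
    (Polynomial.bernoulli n).eval (1/2 : ℚ) = 0 := by
  classical
  set F : PowerSeries ℚ :=
    PowerSeries.mk fun n => Polynomial.aeval (1/2 : ℚ) ((1 / n ! : ℚ) • Polynomial.bernoulli n)
    with hFdef
  have key : F * (exp ℚ - 1) = X * rescale (1/2 : ℚ) (exp ℚ) :=
    Polynomial.bernoulli_generating_function (1/2 : ℚ)
  have r1 : rescale (1 : ℚ) (exp ℚ) = exp ℚ := by rw [rescale_one]; rfl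
  have r0 : rescale (0 : ℚ) (exp ℚ) = 1 := by
    rw [rescale_zero]; simp
  have key2 : rescale (-1 : ℚ) F * (rescale (-1 : ℚ) (exp ℚ) - 1)
      = (-X) * rescale (-(1/2) : ℚ) (exp ℚ) := by
    have h := congrArg (rescale (-1 : ℚ)) key
    rw [map_mul, map_sub, map_one, map_mul, rescale_neg_one_X, rescale_rescale] at h
    rw [h]
    norm_num
  have e1 : rescale (-1 : ℚ) (exp ℚ) * exp ℚ = 1 := by
    have h := exp_mul_exp_eq_exp_add (-1 : ℚ) 1
    rw [r1] at h
    rw [h, show (-1 : ℚ) + 1 = 0 by ring, r0]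
  have e2 : rescale (-(1/2) : ℚ) (exp ℚ) * exp ℚ = rescale (1/2 : ℚ) (exp ℚ) := by
    have h := exp_mul_exp_eq_exp_add (-(1/2) : ℚ) 1
    rw [r1] at h
    rw [h]
    norm_num
  have key3 : rescale (-1 : ℚ) F * (1 - exp ℚ) = (-X) * rescale (1/2 : ℚ) (exp ℚ) := by
    calc rescale (-1 : ℚ) F * (1 - exp ℚ)
        = rescale (-1 : ℚ) F * ((rescale (-1 : ℚ) (exp ℚ) - 1) * exp ℚ) := by
          rw [sub_mul, e1]; ring
      _ = (-X) * (rescale (-(1/2) : ℚ) (exp ℚ) * exp ℚ) := by rw [← mul_assoc, key2]; ring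
      _ = (-X) * rescale (1/2 : ℚ) (exp ℚ) := by rw [e2]
  have hFF : rescale (-1 : ℚ) F = F := by
    have hmul : (rescale (-1 : ℚ) F - F) * (1 - exp ℚ) = 0 := by
      rw [sub_mul, key3]
      have h4 : F * (1 - exp ℚ) = -(F * (exp ℚ - 1)) := by ring
      rw [h4, key]
      ring
    have hne : (1 - exp ℚ) ≠ 0 := by
      intro h
      have := congrArg (PowerSeries.coeff 1) h
      simp [coeff_exp] at this
    rcases mul_eq_zero.mp hmul with h | h
    · exact sub_eq_zero.mp h
    · exact absurd h hne
  have hc := congrArg (PowerSeries.coeff n) hFF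
  rw [coeff_rescale, hn.neg_one_pow] at hc
  have hcF : PowerSeries.coeff n F = 0 := by linarith
  rw [hFdef, PowerSeries.coeff_mk] at hcF
  simp only [map_smul, smul_eq_mul, one_div] at hcF
  have hb : (Polynomial.aeval ((2 : ℚ)⁻¹)) (Polynomial.bernoulli n) = 0 := by
    rcases mul_eq_zero.mp hcF with h | h
    · exact absurd h (by simp [Nat.factorial_ne_zero])
    · exact h
  rw [show (1/2 : ℚ) = (2 : ℚ)⁻¹ by norm_num, ← Polynomial.coe_aeval_eq_eval]
  exact hb

lemma sum_choose_two_pow_bernoulli {n : ℕ} (hn : Odd n) :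
    ∑ i ∈ range (n+1), (n.choose i : ℚ) * 2^i * bernoulli i = 0 := by
  have h0 := bernoulli_poly_eval_half_odd hn
  rw [Polynomial.bernoulli_def, Polynomial.eval_finset_sum] at h0
  simp only [Polynomial.eval_monomial] at h0
  have h1 := congrArg (fun x : ℚ => 2^n * x) h0
  simp only [mul_zero, Finset.mul_sum] at h1
  rw [← h1, ← Finset.sum_range_reflect]
  apply Finset.sum_congr rfl
  intro i hi
  have hile : i ≤ n := by simpa using Finset.mem_range_succ_iff.mp hi
  have hrefl : n + 1 - 1 - i = n - i := by omega
  rw [hrefl]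
  have hsymm : (n.choose (n - i) : ℚ) = n.choose i := by
    rw [Nat.choose_symm hile]
  have h2 : (2:ℚ)^n * (1/2 : ℚ)^i = 2^(n - i) := by
    rw [div_pow, one_pow]
    rw [show n = (n - i) + i by omega, pow_add]
    field_simp
    rw [Nat.add_sub_cancel]
  rw [hsymm, ← h2]
  ring

lemma sum_range_even_odd (f : ℕ → ℚ) (M : ℕ) :
    ∑ i ∈ range (2*M), f i = ∑ j ∈ range M, f (2*j) + ∑ j ∈ range M, f (2*j+1) := by
  induction M with
  | zero => simp
  | succ M ih =>
    rw [show 2*(M+1) = 2*M + 1 + 1 by ring, Finset.sum_range_succ, Finset.sum_range_succ,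
      ih, Finset.sum_range_succ, Finset.sum_range_succ]
    ring

lemma bernoulli_odd_eq_zero' {n : ℕ} (hn : Odd n) (h1 : 1 < n) : bernoulli n = 0 := by
  rw [bernoulli_eq_bernoulli'_of_ne_one (by omega)]
  exact bernoulli'_eq_zero_of_odd hn h1

lemma keyQ (m : ℕ) (hm : 1 ≤ m) :
    ∑ j ∈ range m, ((4:ℚ)^(j+1) - 1) * ((2*m+1).choose (2*(j+1)) : ℚ) * bernoulli (2*(j+1))
      = (2*m+1)/2 := by
  have hodd : Odd (2*m+1) := ⟨m, by ring⟩
  have hB : ∑ i ∈ range (2*m+2), ((2*m+1).choose i : ℚ) * 2^i * bernoulli i = 0 := by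
    have := sum_choose_two_pow_bernoulli hodd
    simpa [show 2*m+1+1 = 2*m+2 by ring] using this
  have hA : ∑ i ∈ range (2*m+2), ((2*m+1).choose i : ℚ) * bernoulli i = 0 := by
    rw [show 2*m+2 = (2*m+1)+1 by ring, Finset.sum_range_succ, sum_bernoulli,
      if_neg (by omega : ¬ 2*m+1 = 1)]
    rw [bernoulli_odd_eq_zero' hodd (by omega)]
    simp
  have hBA : ∑ i ∈ range (2*m+2), ((2*m+1).choose i : ℚ) * (2^i - 1) * bernoulli i = 0 := by
    have h : ∀ i, ((2*m+1).choose i : ℚ) * (2^i - 1) * bernoulli i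
        = ((2*m+1).choose i : ℚ) * 2^i * bernoulli i - ((2*m+1).choose i : ℚ) * bernoulli i := by
      intro i; ring
    simp_rw [h, Finset.sum_sub_distrib, hA, hB, sub_zero]
  rw [show 2*m+2 = 2*(m+1) by ring, sum_range_even_odd] at hBA
  have hoddpart : ∑ j ∈ range (m+1),
      ((2*m+1).choose (2*j+1) : ℚ) * (2^(2*j+1) - 1) * bernoulli (2*j+1) = -(2*m+1)/2 := by
    rw [Finset.sum_range_succ' _ m]
    have hz : ∀ j ∈ range m, ((2*m+1).choose (2*(j+1)+1) : ℚ) * (2^(2*(j+1)+1) - 1)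
        * bernoulli (2*(j+1)+1) = 0 := by
      intro j hj
      rw [bernoulli_odd_eq_zero' ⟨j+1, by ring⟩ (by omega)]
      ring
    rw [Finset.sum_congr rfl hz]
    simp [bernoulli_one]
    ring
  have hevenpart : ∑ j ∈ range (m+1),
      ((2*m+1).choose (2*j) : ℚ) * (2^(2*j) - 1) * bernoulli (2*j)
      = ∑ j ∈ range m, ((4:ℚ)^(j+1) - 1) * ((2*m+1).choose (2*(j+1)) : ℚ) * bernoulli (2*(j+1)) := by
    rw [Finset.sum_range_succ' _ m]
    have h00 : ((2*m+1).choose (2*0) : ℚ) * (2^(2*0) - 1) * bernoulli (2*0) = 0 := by norm_num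
    rw [h00, add_zero]
    apply Finset.sum_congr rfl
    intro j hj
    rw [show (2:ℚ)^(2*(j+1)) = 4^(j+1) by rw [pow_mul]; norm_num]
    ring
  rw [hoddpart, hevenpart] at hBA
  linarith

/-- Shorthand for the rational part of `λ(2j)`. -/
noncomputable def cB (j : ℕ) : ℝ := ((4:ℝ)^j - 1) * (bernoulli (2*j) : ℝ) / (2*j)!

lemma dirichletLambda_eq (k : ℕ) (hk : k ≠ 0) :
    dirichletLambda (2*k) = (-1:ℝ)^(k+1) * π^(2*k) * cB k / 2 := by
  have hZ := hasSum_zeta_nat hk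
  set Z : ℝ := (-1:ℝ)^(k+1) * 2^(2*k-1) * π^(2*k) * (bernoulli (2*k) : ℝ) / (2*k)! with hZdef
  have hsum : Summable (fun n : ℕ => 1 / (2*(n:ℝ)+1)^(2*k)) := by
    have hbig : Summable (fun n : ℕ => 1 / ((n:ℝ)+1)^(2*k)) := by
      have h1 : Summable (fun n : ℕ => 1 / ((n:ℝ))^(2*k)) :=
        summable_one_div_nat_pow.mpr (by omega)
      have h2 := (summable_nat_add_iff 1).mpr h1
      apply h2.congr
      intro n
      push_cast
      ring
    apply Summable.of_nonneg_of_le (fun n => by positivity) _ hbig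
    intro n
    apply one_div_le_one_div_of_le
    · positivity
    · apply pow_le_pow_left₀ (by positivity)
      linarith [Nat.cast_nonneg (α := ℝ) n]
  have hO : HasSum (fun n : ℕ => 1 / (2*(n:ℝ)+1)^(2*k)) (dirichletLambda (2*k)) := by
    rw [dirichletLambda]
    exact hsum.hasSum
  have heq : (fun n : ℕ => (1/4:ℝ)^k * (1 / ((n:ℝ))^(2*k)))
      = fun n : ℕ => 1 / (((2*n : ℕ)):ℝ)^(2*k) := by
    funext n
    push_cast
    rw [mul_pow, show (2:ℝ)^(2*k) = 4^k by rw [pow_mul]; norm_num]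
    rw [div_pow, one_pow, one_div_mul_one_div]
  have hE : HasSum (fun n : ℕ => 1 / (((2*n : ℕ)):ℝ)^(2*k)) ((1/4:ℝ)^k * Z) := by
    rw [← heq]
    exact hZ.mul_left _
  have hO' : HasSum (fun n : ℕ => 1 / (((2*n+1 : ℕ)):ℝ)^(2*k)) (dirichletLambda (2*k)) := by
    have heq2 : (fun n : ℕ => 1 / (2*(n:ℝ)+1)^(2*k))
        = fun n : ℕ => 1 / (((2*n+1 : ℕ)):ℝ)^(2*k) := by
      funext n
      push_cast
      ring
    rw [← heq2]
    exact hO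
  have hfull : HasSum (fun n : ℕ => 1/(n:ℝ)^(2*k)) ((1/4:ℝ)^k * Z + dirichletLambda (2*k)) :=
    HasSum.even_add_odd hE hO'
  have huniq : Z = (1/4:ℝ)^k * Z + dirichletLambda (2*k) := hZ.unique hfull
  have hlam : dirichletLambda (2*k) = (1 - (1/4:ℝ)^k) * Z := by linarith [huniq]
  have h2 : (2:ℝ)^(2*k-1) = 4^k / 2 := by
    rw [eq_div_iff (by norm_num : (2:ℝ) ≠ 0)]
    rw [show (4:ℝ)^k = (2^2)^k by norm_num, ← pow_mul, ← pow_succ]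
    congr 1
    omega
  have h4 : (1 - (1/4:ℝ)^k) * 4^k = 4^k - 1 := by
    rw [sub_mul, one_mul, one_div, inv_pow, inv_mul_cancel₀ (by positivity)]
  rw [hlam, hZdef, h2, cB]
  calc (1 - (1/4:ℝ)^k) * ((-1:ℝ)^(k+1) * (4^k/2) * π^(2*k) * (bernoulli (2*k) : ℝ) / (2*k)!)
      = ((1 - (1/4:ℝ)^k) * 4^k) * ((-1:ℝ)^(k+1) * π^(2*k) * (bernoulli (2*k) : ℝ)) / (2*(2*k)!) := by
        ring
    _ = (-1:ℝ)^(k+1) * π^(2*k) * (((4:ℝ)^k - 1) * (bernoulli (2*k) : ℝ) / (2*k)!) / 2 := by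
        rw [h4]; ring

lemma starIcc (m : ℕ) (hm : 1 ≤ m) :
    ∑ j ∈ Icc 1 m, cB j / ((2*m+1-2*j)! : ℝ) = 1 / (2*(2*m)!) := by
  have QR : ∑ j ∈ range m,
      ((4:ℝ)^(j+1) - 1) * (((2*m+1).choose (2*(j+1))) : ℝ) * (bernoulli (2*(j+1)) : ℝ)
      = (2*(m:ℝ)+1)/2 := by
    have := keyQ m hm
    have h := congrArg (Rat.cast : ℚ → ℝ) this
    push_cast at h
    convert h using 2
  have hIcc : ∑ j ∈ Icc 1 m, cB j / ((2*m+1-2*j)! : ℝ)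
      = ∑ j ∈ range m, cB (1+j) / ((2*m+1-2*(1+j))! : ℝ) := by
    rw [show Icc 1 m = Ico 1 (m+1) by rfl, Finset.sum_Ico_eq_sum_range]
    simp
  rw [hIcc]
  have hfacne : ((2*m+1)! : ℝ) ≠ 0 := by exact_mod_cast Nat.factorial_ne_zero _
  have key : ∑ j ∈ range m, cB (1+j) / ((2*m+1-2*(1+j))! : ℝ)
      = (∑ j ∈ range m,
        ((4:ℝ)^(j+1) - 1) * (((2*m+1).choose (2*(j+1))) : ℝ) * (bernoulli (2*(j+1)) : ℝ))
        / ((2*m+1)! : ℝ) := by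
    rw [Finset.sum_div]
    apply Finset.sum_congr rfl
    intro j hj
    have hjm : j < m := Finset.mem_range.mp hj
    have hle : 2*(j+1) ≤ 2*m+1 := by omega
    rw [Nat.cast_choose ℝ hle, cB]
    have hf1 : ((2*(1+j))! : ℝ) ≠ 0 := by exact_mod_cast Nat.factorial_ne_zero _
    have hf2 : ((2*m+1-2*(j+1))! : ℝ) ≠ 0 := by exact_mod_cast Nat.factorial_ne_zero _
    rw [show (1+j) = (j+1) by ring]
    field_simp
  rw [key, QR]
  rw [show (2*m+1)! = (2*m+1) * (2*m)! from Nat.factorial_succ (2*m)]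
  have hf3 : ((2*m)! : ℝ) ≠ 0 := by exact_mod_cast Nat.factorial_ne_zero _
  push_cast
  field_simp

end LambdaRecAux

open LambdaRecAux Nat in
theorem lambda_recurrence (m : ℕ) (hm : 0 < m) :
    dirichletLambda (2 * m) =
      (-1 : ℝ) ^ (m - 1) *
        (π ^ (2 * m) / (4 * (Nat.factorial (2 * m))) +
          ∑ k ∈ Finset.Icc 1 (m - 1),
            (-1 : ℝ) ^ (m - k) * π ^ (2 * k) / (Nat.factorial (2 * k + 1)) *
              dirichletLambda (2 * m - 2 * k)) := by
  have hmain := starIcc m hm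
  -- split off the top term j = m
  have hsplit : ∑ j ∈ Icc 1 m, cB j / ((2*m+1-2*j)! : ℝ)
      = (∑ j ∈ Icc 1 (m-1), cB j / ((2*m+1-2*j)! : ℝ)) + cB m := by
    rw [show m = (m-1)+1 by omega]
    rw [Finset.sum_Icc_succ_top (by omega : 1 ≤ (m-1)+1)]
    congr 1
    rw [show 2*((m-1)+1)+1-2*((m-1)+1) = 1 by omega]
    simp [Nat.factorial]
  -- reindex k ↦ m - k
  have hreindex : ∑ k ∈ Icc 1 (m-1), cB (m-k) / (((2*k+1)!) : ℝ)
      = ∑ j ∈ Icc 1 (m-1), cB j / ((2*m+1-2*j)! : ℝ) := by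
    apply Finset.sum_nbij' (i := fun k => m - k) (j := fun j => m - j)
    · intro a ha
      simp only [Finset.mem_Icc] at ha ⊢
      omega
    · intro a ha
      simp only [Finset.mem_Icc] at ha ⊢
      omega
    · intro a ha
      simp only [Finset.mem_Icc] at ha
      omega
    · intro a ha
      simp only [Finset.mem_Icc] at ha
      omega
    · intro a ha
      simp only [Finset.mem_Icc] at ha
      rw [show 2*m+1-2*(m-a) = 2*a+1 by omega]
  have hsum : ∑ k ∈ Icc 1 (m-1), cB (m-k) / (((2*k+1)!) : ℝ) = 1/(2*(2*m)!) - cB m := by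
    rw [hreindex]
    rw [hsplit] at hmain
    linarith
  -- rewrite each term of the goal sum
  have hterm : ∀ k ∈ Icc 1 (m-1),
      (-1 : ℝ) ^ (m - k) * π ^ (2 * k) / ((2 * k + 1)! : ℝ) * dirichletLambda (2 * m - 2 * k)
      = -(π^(2*m) * (cB (m-k) / (((2*k+1)!) : ℝ)) / 2) := by
    intro k hk
    obtain ⟨hk1, hk2⟩ := Finset.mem_Icc.mp hk
    have harg : 2*m - 2*k = 2*(m-k) := by omega
    rw [harg, dirichletLambda_eq (m-k) (by omega)]
    have hsign : (-1:ℝ)^(m-k) * (-1:ℝ)^((m-k)+1) = -1 := by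
      rw [pow_succ, ← mul_assoc, ← pow_add]
      rw [Even.neg_one_pow ⟨m-k, by ring⟩]
      ring
    have hpi : π^(2*k) * π^(2*(m-k)) = π^(2*m) := by
      rw [← pow_add]
      congr 1
      omega
    have hfk : (((2*k+1)!) : ℝ) ≠ 0 := by exact_mod_cast Nat.factorial_ne_zero _
    field_simp
    calc (-1:ℝ)^(m-k) * π^(2*k) * (-1:ℝ)^(m-k+1) * π^(2*(m-k)) * cB (m-k)
        = ((-1:ℝ)^(m-k) * (-1:ℝ)^((m-k)+1)) * (π^(2*k) * π^(2*(m-k))) * cB (m-k) := by ring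
      _ = -(cB (m-k) * π^(2*m)) := by rw [hsign, hpi]; ring
  rw [Finset.sum_congr rfl hterm]
  have hgoalsum : ∑ k ∈ Icc 1 (m-1), -(π^(2*m) * (cB (m-k) / (((2*k+1)!) : ℝ)) / 2)
      = -(π^(2*m) * (1/(2*(2*m)!) - cB m) / 2) := by
    rw [← hsum, Finset.mul_sum, Finset.sum_div, ← Finset.sum_neg_distrib]
  rw [hgoalsum, dirichletLambda_eq m (by omega)]
  have hsgn : (-1:ℝ)^(m+1) = (-1:ℝ)^(m-1) := by
    rw [show m+1 = (m-1)+2 by omega, pow_add]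
    norm_num
  rw [hsgn]
  have hf : (((2*m)!) : ℝ) ≠ 0 := by exact_mod_cast Nat.factorial_ne_zero _
  field_simp
  ring
end

section
/- Let m be a positive integer and let α be a complex number with α ≠ 1/2. Then (-1)^{m+1} · (α^{2m} - (α-1)^{2m})/4 · π^{2m+2}/(2m)! + Σ_{k=1}^{m} (-1)^k (α^{2k-1} + (α-1)^{2k-1}) · π^{2k}/(2k-1)! · λ(2m-2k+2) = 0. -/
open Real Finset

open Polynomial PowerSeries

noncomputable def Bc (n : ℕ) (x : ℂ) : ℂ := Polynomial.aeval x (Polynomial.bernoulli n)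

noncomputable def BF (x : ℂ) : PowerSeries ℂ :=
  PowerSeries.mk fun n => Polynomial.aeval x ((1 / (n.factorial : ℚ)) • Polynomial.bernoulli n)

lemma coeff_BF (x : ℂ) (n : ℕ) :
    (PowerSeries.coeff n) (BF x) = ((n.factorial : ℂ))⁻¹ * Bc n x := by
  simp only [BF, Bc, coeff_mk, map_smul]
  rw [Rat.smul_def]
  push_cast
  ring

lemma BF_spec (x : ℂ) : BF x * (exp ℂ - 1) = PowerSeries.X * rescale x (exp ℂ) :=
  Polynomial.bernoulli_generating_function x

lemma exp_sub_one_ne_zero : (exp ℂ - 1) ≠ 0 := by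
  intro h
  have := congrArg (PowerSeries.coeff 1) h
  simp [coeff_exp] at this

lemma BF_add_one (x : ℂ) : BF (x + 1) = BF x + PowerSeries.X * rescale x (exp ℂ) := by
  apply mul_right_cancel₀ exp_sub_one_ne_zero
  rw [BF_spec, add_mul, BF_spec]
  have h1 : rescale (x + 1) (exp ℂ) = rescale x (exp ℂ) * exp ℂ := by
    rw [← exp_mul_exp_eq_exp_add x 1, rescale_one]; rfl
  rw [h1]; ring

lemma Bc_add_one (n : ℕ) (x : ℂ) : Bc (n + 1) (x + 1) = Bc (n + 1) x + (n + 1) * x ^ n := by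
  have h := congrArg (PowerSeries.coeff (n + 1)) (BF_add_one x)
  rw [map_add, coeff_BF, coeff_BF, coeff_succ_X_mul, coeff_rescale, coeff_exp] at h
  have hfac : (((n + 1).factorial : ℂ)) ≠ 0 := by exact_mod_cast Nat.factorial_ne_zero (n + 1)
  have hfac' : ((n.factorial : ℂ)) ≠ 0 := by exact_mod_cast Nat.factorial_ne_zero n
  have halg : (algebraMap ℚ ℂ) (1 / (n.factorial : ℚ)) = ((n.factorial : ℂ))⁻¹ := by
    push_cast [map_div₀]; simp
  have key : ((n.factorial : ℂ))⁻¹ = ((n : ℂ) + 1) * (((n + 1).factorial : ℂ))⁻¹ := by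
    rw [Nat.factorial_succ]
    push_cast
    rw [mul_inv]
    rw [← mul_assoc, mul_inv_cancel₀ (Nat.cast_add_one_ne_zero n), one_mul]
  rw [halg, key] at h
  apply mul_left_cancel₀ (inv_ne_zero hfac)
  linear_combination h

lemma rescale_exp_sub_one_ne_zero : rescale (2 : ℂ) (exp ℂ - 1) ≠ 0 := by
  intro h
  have := congrArg (PowerSeries.coeff 1) h
  simp [coeff_exp] at this

lemma C_two_eq : (PowerSeries.C (2 : ℂ)) = (2 : PowerSeries ℂ) := map_ofNat _ 2

lemma BF_raabe (x : ℂ) :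
    rescale (2 : ℂ) (BF (x / 2)) + rescale (2 : ℂ) (BF ((x + 1) / 2)) = 2 * BF x := by
  apply mul_right_cancel₀ rescale_exp_sub_one_ne_zero
  have hr : ∀ y : ℂ, rescale (2 : ℂ) (BF y) * rescale (2 : ℂ) (exp ℂ - 1) =
      PowerSeries.C (2 : ℂ) * PowerSeries.X * rescale (y * 2) (exp ℂ) := by
    intro y
    rw [← map_mul, BF_spec, map_mul, rescale_rescale, rescale_X]
  rw [add_mul, hr, hr]
  have h2 : x / 2 * 2 = x := by field_simp
  have h3 : (x + 1) / 2 * 2 = x + 1 := by field_simp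
  rw [h2, h3]
  have hes : rescale (2 : ℂ) (exp ℂ - 1) = (exp ℂ - 1) * (exp ℂ + 1) := by
    rw [map_sub, map_one]
    have : rescale (2 : ℂ) (exp ℂ) = exp ℂ ^ 2 := by
      rw [exp_pow_eq_rescale_exp]; norm_num
    rw [this]; ring
  have h4 : rescale (x + 1) (exp ℂ) = rescale x (exp ℂ) * exp ℂ := by
    rw [← exp_mul_exp_eq_exp_add x 1, rescale_one]; rfl
  rw [hes, C_two_eq]
  linear_combination (-2 : PowerSeries ℂ) * (exp ℂ + 1) * (BF_spec x) +
    (2 : PowerSeries ℂ) * PowerSeries.X * h4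

lemma Bc_raabe (n : ℕ) (x : ℂ) :
    (2 : ℂ) ^ n * (Bc n (x / 2) + Bc n ((x + 1) / 2)) = 2 * Bc n x := by
  have h := congrArg (PowerSeries.coeff n) (BF_raabe x)
  rw [map_add, coeff_rescale, coeff_rescale, coeff_BF, coeff_BF] at h
  have h2 : (PowerSeries.coeff n) (2 * BF x) = 2 * ((n.factorial : ℂ))⁻¹ * Bc n x := by
    rw [← C_two_eq, PowerSeries.coeff_C_mul, coeff_BF]; ring
  rw [h2] at h
  have hfac : ((n.factorial : ℂ)) ≠ 0 := by exact_mod_cast Nat.factorial_ne_zero n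
  apply mul_left_cancel₀ (inv_ne_zero hfac)
  linear_combination h

lemma Bc_sum (n : ℕ) (x : ℂ) :
    Bc n x = ∑ i ∈ range (n + 1), (_root_.bernoulli i : ℂ) * ((n.choose i : ℕ) : ℂ) * x ^ (n - i) := by
  simp only [Bc, Polynomial.bernoulli, map_sum, aeval_monomial]
  refine Finset.sum_congr rfl fun i _ => ?_
  rw [eq_ratCast]
  push_cast
  ring

lemma hasSum_lambda (j : ℕ) (hj : j ≠ 0) :
    HasSum (fun n : ℕ => 1 / (2 * (n : ℝ) + 1) ^ (2 * j))
      ((-1 : ℝ) ^ (j + 1) * ((2 : ℝ) ^ (2 * j) - 1) * π ^ (2 * j) * (_root_.bernoulli (2 * j) : ℝ) /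
        (2 * ((2 * j).factorial : ℝ))) := by
  set f : ℕ → ℝ := fun n => 1 / (n : ℝ) ^ (2 * j) with hf
  set S : ℝ := (-1 : ℝ) ^ (j + 1) * (2 : ℝ) ^ (2 * j - 1) * π ^ (2 * j) *
      (_root_.bernoulli (2 * j) : ℝ) / ((2 * j).factorial : ℝ) with hS
  have h : HasSum f S := hasSum_zeta_nat hj
  have heven : HasSum (fun k => f (2 * k)) (((2 : ℝ) ^ (2 * j))⁻¹ * S) := by
    have := h.mul_left ((2 : ℝ) ^ (2 * j))⁻¹
    refine this.congr_fun fun k => ?_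
    simp only [hf]
    push_cast
    rw [mul_pow, one_div, one_div, mul_inv]
  have hoddsum : Summable fun k => f (2 * k + 1) := by
    apply h.summable.comp_injective
    intro a b hab
    simp only at hab
    omega
  have hodd := hoddsum.hasSum
  have huniq := (heven.even_add_odd hodd).unique h
  have hval : ∑' k, f (2 * k + 1) = S - ((2 : ℝ) ^ (2 * j))⁻¹ * S := by linarith
  rw [hval] at hodd
  have : S - ((2 : ℝ) ^ (2 * j))⁻¹ * S =
      (-1 : ℝ) ^ (j + 1) * ((2 : ℝ) ^ (2 * j) - 1) * π ^ (2 * j) *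
        (_root_.bernoulli (2 * j) : ℝ) / (2 * ((2 * j).factorial : ℝ)) := by
    have h1 : (2 : ℝ) ^ (2 * j) = 2 ^ (2 * j - 1) * 2 := by
      rw [← pow_succ]
      congr 1
      omega
    have h2 : ((2 * j).factorial : ℝ) ≠ 0 := by exact_mod_cast Nat.factorial_ne_zero (2 * j)
    have h3 : (2 : ℝ) ^ (2 * j) ≠ 0 := by positivity
    have h4 : (2 : ℝ) ^ (2 * j - 1) = 2 ^ (2 * j) / 2 := by rw [h1]; ring
    rw [hS, h4]
    field_simp
  rw [this] at hodd
  refine hodd.congr_fun fun k => ?_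
  simp only [hf]
  push_cast
  ring_nf

lemma sum_split (m : ℕ) (f : ℕ → ℂ) (h0 : f 0 = 0) (hodd : ∀ i, Odd i → i ≠ 1 → f i = 0) :
    ∑ i ∈ range (2 * m + 2), f i = f 1 + ∑ j ∈ range m, f (2 * m - 2 * j) := by
  have pair : ∀ n : ℕ, ∑ i ∈ range (2 * n + 2), f i
      = ∑ j ∈ range (n + 1), (f (2 * j) + f (2 * j + 1)) := by
    intro n
    induction n with
    | zero => simp [Finset.sum_range_succ]
    | succ n ih =>
        have h2 : 2 * (n + 1) + 2 = (2 * n + 2) + 1 + 1 := by ring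
        rw [h2, Finset.sum_range_succ, Finset.sum_range_succ, ih]
        conv_rhs => rw [Finset.sum_range_succ]
        have e1 : 2 * (n + 1) = 2 * n + 2 := by ring
        rw [e1]
        have e3 : 2 * n + 2 + 1 = 2 * n + 3 := by omega
        rw [e3]
        ring
  rw [pair, Finset.sum_add_distrib]
  have hO : ∑ j ∈ range (m + 1), f (2 * j + 1) = f 1 := by
    rw [Finset.sum_eq_single 0 (fun b _ hb => hodd _ ⟨b, by ring⟩ (by omega))
      (fun hmem => absurd (Finset.mem_range.mpr (Nat.succ_pos m)) hmem)]
  have hE : ∑ j ∈ range (m + 1), f (2 * j) = ∑ j ∈ range m, f (2 * m - 2 * j) := by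
    have hrefl := Finset.sum_range_reflect (fun j => f (2 * j)) (m + 1)
    rw [← hrefl, Finset.sum_range_succ]
    simp only [Nat.add_sub_cancel]
    have : m - m = 0 := by omega
    rw [this, mul_zero, h0, add_zero]
    refine Finset.sum_congr rfl fun j hj => ?_
    have := Finset.mem_range.mp hj
    congr 1
    omega
  rw [hO, hE]
  ring

lemma key_sum (m : ℕ) (x : ℂ) :
    ∑ j ∈ range m, (_root_.bernoulli (2 * m - 2 * j) : ℂ) *
        (((2 * m + 1).choose (2 * j + 1) : ℕ) : ℂ) * ((2 : ℂ) ^ (2 * m - 2 * j) - 1) *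
        x ^ (2 * j + 1)
      = 2 ^ (2 * m + 1) * Bc (2 * m + 1) (x / 2) - Bc (2 * m + 1) x
        + ((2 * m + 1 : ℕ) : ℂ) / 2 * x ^ (2 * m) := by
  set N := 2 * m + 1 with hN
  set f : ℕ → ℂ := fun i => (_root_.bernoulli i : ℂ) * ((N.choose i : ℕ) : ℂ) *
      ((2 : ℂ) ^ i - 1) * x ^ (N - i) with hf
  have h0 : f 0 = 0 := by simp [hf]
  have hodd : ∀ i, Odd i → i ≠ 1 → f i = 0 := by
    intro i hi h1
    have hb : _root_.bernoulli i = 0 := by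
      rw [bernoulli_eq_bernoulli'_of_ne_one h1]
      exact bernoulli'_eq_zero_of_odd hi (by rcases hi with ⟨k, rfl⟩; omega)
    simp [hf, hb]
  have hsplit := sum_split m f h0 hodd
  have htot : ∑ i ∈ range (2 * m + 2), f i = 2 ^ N * Bc N (x / 2) - Bc N x := by
    have hr : 2 * m + 2 = N + 1 := by omega
    rw [hr, Bc_sum N x, Bc_sum N (x / 2), Finset.mul_sum, ← Finset.sum_sub_distrib]
    refine Finset.sum_congr rfl fun i hi => ?_
    have hiN : i ≤ N := Finset.mem_range_succ_iff.mp hi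
    have hpow : (2 : ℂ) ^ N * (x / 2) ^ (N - i) = 2 ^ i * x ^ (N - i) := by
      have h2 : (2 : ℂ) ^ (N - i) ≠ 0 := pow_ne_zero _ two_ne_zero
      have h3 : (2 : ℂ) ^ i * 2 ^ (N - i) = 2 ^ N := by
        rw [← pow_add]
        congr 1
        omega
      rw [div_pow]
      field_simp
      linear_combination -(x ^ (N - i)) * h3
    simp only [hf]
    linear_combination (-(_root_.bernoulli i : ℂ) * ((N.choose i : ℕ) : ℂ)) * hpow
  have hf1 : f 1 = -(((N : ℕ) : ℂ) / 2) * x ^ (2 * m) := by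
    simp only [hf]
    rw [Nat.choose_one_right]
    have : N - 1 = 2 * m := by omega
    rw [this]
    have hb1 : (_root_.bernoulli 1 : ℂ) = -(1 / 2) := by
      rw [_root_.bernoulli_one]
      push_cast
      ring
    rw [hb1]
    ring
  have hterm : ∀ j ∈ range m, f (2 * m - 2 * j) =
      (_root_.bernoulli (2 * m - 2 * j) : ℂ) * (((2 * m + 1).choose (2 * j + 1) : ℕ) : ℂ) *
        ((2 : ℂ) ^ (2 * m - 2 * j) - 1) * x ^ (2 * j + 1) := by
    intro j hj
    have hjm := Finset.mem_range.mp hj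
    simp only [hf]
    have h1 : N - (2 * m - 2 * j) = 2 * j + 1 := by omega
    have h2 : N.choose (2 * m - 2 * j) = N.choose (2 * j + 1) := by
      have h3 : 2 * j + 1 ≤ N := by omega
      have h4 : N - (2 * j + 1) = 2 * m - 2 * j := by omega
      rw [← h4, Nat.choose_symm h3]
    rw [h1, h2, hN]
  rw [Finset.sum_congr rfl hterm] at hsplit
  rw [htot, hf1] at hsplit
  linear_combination -hsplit

lemma key_sum2 (m : ℕ) (α : ℂ) :
    ∑ j ∈ range m, (_root_.bernoulli (2 * m - 2 * j) : ℂ) *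
        (((2 * m + 1).choose (2 * j + 1) : ℕ) : ℂ) * ((2 : ℂ) ^ (2 * m - 2 * j) - 1) *
        (α ^ (2 * j + 1) + (α - 1) ^ (2 * j + 1))
      = ((2 * m + 1 : ℕ) : ℂ) / 2 * (α ^ (2 * m) - (α - 1) ^ (2 * m)) := by
  have h1 := key_sum m α
  have h2 := key_sum m (α - 1)
  have hraabe := Bc_raabe (2 * m + 1) (α - 1)
  have hadd := Bc_add_one (2 * m) (α - 1)
  rw [show α - 1 + 1 = α by ring] at hraabe hadd
  have hsplit : ∑ j ∈ range m, (_root_.bernoulli (2 * m - 2 * j) : ℂ) *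
        (((2 * m + 1).choose (2 * j + 1) : ℕ) : ℂ) * ((2 : ℂ) ^ (2 * m - 2 * j) - 1) *
        (α ^ (2 * j + 1) + (α - 1) ^ (2 * j + 1))
      = (∑ j ∈ range m, (_root_.bernoulli (2 * m - 2 * j) : ℂ) *
          (((2 * m + 1).choose (2 * j + 1) : ℕ) : ℂ) * ((2 : ℂ) ^ (2 * m - 2 * j) - 1) *
          α ^ (2 * j + 1))
        + ∑ j ∈ range m, (_root_.bernoulli (2 * m - 2 * j) : ℂ) *
          (((2 * m + 1).choose (2 * j + 1) : ℕ) : ℂ) * ((2 : ℂ) ^ (2 * m - 2 * j) - 1) *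
          (α - 1) ^ (2 * j + 1) := by
    rw [← Finset.sum_add_distrib]
    exact Finset.sum_congr rfl fun j _ => by ring
  rw [hsplit, h1, h2]
  have hcast : ((2 * m + 1 : ℕ) : ℂ) = ((2 * m : ℕ) : ℂ) + 1 := by push_cast; ring
  rw [hcast]
  linear_combination hraabe - hadd

theorem lambda_recurrence_family_odd (m : ℕ) (hm : 0 < m) (α : ℂ) (hα : α ≠ 1 / 2) :
    (-1 : ℂ) ^ (m + 1) * ((α ^ (2 * m) - (α - 1) ^ (2 * m)) / 4) *
        ((π : ℂ) ^ (2 * m + 2) / (Nat.factorial (2 * m))) +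
      ∑ k ∈ Finset.Icc 1 m,
        (-1 : ℂ) ^ k * (α ^ (2 * k - 1) + (α - 1) ^ (2 * k - 1)) *
          ((π : ℂ) ^ (2 * k) / (Nat.factorial (2 * k - 1))) *
            (dirichletLambda (2 * m - 2 * k + 2) : ℂ) = 0 := by
  set c : ℂ := (-1 : ℂ) ^ m * (π : ℂ) ^ (2 * m + 2) / (2 * (((2 * m + 1).factorial : ℕ) : ℂ))
    with hc
  have hsum : ∑ k ∈ Finset.Icc 1 m,
      (-1 : ℂ) ^ k * (α ^ (2 * k - 1) + (α - 1) ^ (2 * k - 1)) *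
        ((π : ℂ) ^ (2 * k) / (Nat.factorial (2 * k - 1))) *
          (dirichletLambda (2 * m - 2 * k + 2) : ℂ)
      = ∑ i ∈ range m, c * ((_root_.bernoulli (2 * m - 2 * i) : ℂ) *
          (((2 * m + 1).choose (2 * i + 1) : ℕ) : ℂ) * ((2 : ℂ) ^ (2 * m - 2 * i) - 1) *
          (α ^ (2 * i + 1) + (α - 1) ^ (2 * i + 1))) := by
    rw [← Finset.Ico_add_one_right_eq_Icc, Finset.sum_Ico_eq_sum_range]
    refine Finset.sum_congr (by norm_num) fun i hi => ?_
    have him := Finset.mem_range.mp hi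
    have e1 : 2 * (1 + i) - 1 = 2 * i + 1 := by omega
    have e2 : 2 * m - 2 * (1 + i) + 2 = 2 * (m - i) := by omega
    have hmi : m - i ≠ 0 := by omega
    have hlam : dirichletLambda (2 * (m - i)) =
        (-1 : ℝ) ^ ((m - i) + 1) * ((2 : ℝ) ^ (2 * (m - i)) - 1) * π ^ (2 * (m - i)) *
          (_root_.bernoulli (2 * (m - i)) : ℝ) / (2 * ((2 * (m - i)).factorial : ℝ)) :=
      (hasSum_lambda (m - i) hmi).tsum_eq
    rw [e1, e2, hlam]
    have e3 : 2 * (m - i) = 2 * m - 2 * i := by omega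
    rw [e3]
    have hsgn : ((-1 : ℂ) ^ (1 + i)) * ((-1 : ℂ) ^ ((m - i) + 1)) = (-1 : ℂ) ^ m := by
      rw [← pow_add]
      have h4 : 1 + i + ((m - i) + 1) = m + 2 := by omega
      rw [h4, pow_add]
      norm_num
    have hπ : (π : ℂ) ^ (2 * (1 + i)) * (π : ℂ) ^ (2 * m - 2 * i) = (π : ℂ) ^ (2 * m + 2) := by
      rw [← pow_add]
      congr 1
      omega
    have hfac : (((2 * m + 1).factorial : ℕ) : ℂ) =
        (((2 * m + 1).choose (2 * i + 1) : ℕ) : ℂ) * (((2 * i + 1).factorial : ℕ) : ℂ) *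
          (((2 * m - 2 * i).factorial : ℕ) : ℂ) := by
      have h5 : 2 * i + 1 ≤ 2 * m + 1 := by omega
      have h6 := Nat.choose_mul_factorial_mul_factorial h5
      have h7 : 2 * m + 1 - (2 * i + 1) = 2 * m - 2 * i := by omega
      rw [h7] at h6
      exact_mod_cast h6.symm
    have hf1 : (((2 * i + 1).factorial : ℕ) : ℂ) ≠ 0 := by
      exact_mod_cast Nat.factorial_ne_zero (2 * i + 1)
    have hf2 : (((2 * m - 2 * i).factorial : ℕ) : ℂ) ≠ 0 := by
      exact_mod_cast Nat.factorial_ne_zero (2 * m - 2 * i)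
    have hf3 : (((2 * m + 1).factorial : ℕ) : ℂ) ≠ 0 := by
      exact_mod_cast Nat.factorial_ne_zero (2 * m + 1)
    have hch : (((2 * m + 1).choose (2 * i + 1) : ℕ) : ℂ) ≠ 0 := by
      have := Nat.choose_pos (show 2 * i + 1 ≤ 2 * m + 1 by omega)
      exact_mod_cast this.ne'
    rw [hc, ← hsgn, ← hπ, hfac]
    push_cast
    field_simp [hf1, hf2, hch]
  rw [hsum, ← Finset.mul_sum, key_sum2]
  have hfacN : (((2 * m + 1).factorial : ℕ) : ℂ) = ((2 * m + 1 : ℕ) : ℂ) *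
      (((2 * m).factorial : ℕ) : ℂ) := by exact_mod_cast Nat.factorial_succ (2 * m)
  have hfm : (((2 * m).factorial : ℕ) : ℂ) ≠ 0 := by
    exact_mod_cast Nat.factorial_ne_zero (2 * m)
  have hN : ((2 * m + 1 : ℕ) : ℂ) ≠ 0 := by
    exact_mod_cast Nat.succ_ne_zero (2 * m)
  have hN' : ((m : ℂ) * 2 + 1) ≠ 0 := by
    intro h
    exact hN (by push_cast; linear_combination h)
  rw [hc, hfacN, pow_succ]
  have h8 : ((2 * m + 1 : ℕ) : ℂ) = (m : ℂ) * 2 + 1 := by push_cast; ring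
  rw [h8]
  field_simp [hfm, hN']
  have hinv : ((m : ℂ) * 2 + 1)⁻¹ * ((m : ℂ) * 2 + 1) = 1 := inv_mul_cancel₀ hN'
  linear_combination (4 * (π : ℂ) ^ 2 * (π : ℂ) ^ (2 * m) * (-1 : ℂ) ^ m * (α ^ (2 * m) - (α - 1) ^ (2 * m))) * hinv
end

section
/- Let m be a nonnegative integer and let α be a complex number. Then (-1)^{m+1} · (α^{2m+1} - (α-1)^{2m+1})/4 · π^{2m+2}/(2m+1)! + Σ_{k=0}^{m} (-1)^k (α^{2k} + (α-1)^{2k}) · π^{2k}/(2k)! · λ(2m-2k+2) = 0, where 0^0 is interpreted as 1. -/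
open Real Finset

set_option maxHeartbeats 4000000

section PSsection

open PowerSeries

local notation "E" => PowerSeries.exp ℚ
local notation "B" => bernoulliPowerSeries ℚ

lemma aux_ps : (rescale (4:ℚ) B - rescale 2 B + X) * (E + rescale (-1) E)
    = X * (E - rescale (-1) E) := by
  have k22 : rescale (2:ℚ) E * rescale 2 E = rescale 4 E := by
    rw [PowerSeries.exp_mul_exp_eq_exp_add]; norm_num
  have kN2 : rescale (-1:ℚ) E * rescale 2 E = E := by
    rw [PowerSeries.exp_mul_exp_eq_exp_add]; norm_num [rescale_one]
  have h2 : rescale (2:ℚ) B * (rescale 2 E - 1) = C 2 * X := by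
    have := congrArg (rescale (2:ℚ)) (bernoulliPowerSeries_mul_exp_sub_one ℚ)
    rwa [map_mul, map_sub, map_one, rescale_X] at this
  have h4 : rescale (4:ℚ) B * (rescale 2 E * rescale 2 E - 1) = C 4 * X := by
    rw [k22]
    have := congrArg (rescale (4:ℚ)) (bernoulliPowerSeries_mul_exp_sub_one ℚ)
    rwa [map_mul, map_sub, map_one, rescale_X] at this
  have hQ : rescale (2:ℚ) E * rescale 2 E - 1 ≠ 0 := by
    intro h
    have := congrArg (PowerSeries.coeff 1) h
    rw [k22] at this
    simp [PowerSeries.coeff_rescale, PowerSeries.coeff_exp, PowerSeries.coeff_one] at this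
  apply mul_right_cancel₀ hQ
  have hC2 : (C 2 : ℚ⟦X⟧) = 2 := map_ofNat _ 2
  have hC4 : (C 4 : ℚ⟦X⟧) = 4 := map_ofNat _ 4
  rw [hC2] at h2; rw [hC4] at h4
  linear_combination (E + rescale (-1:ℚ) E) * h4 - (E + rescale (-1:ℚ) E) * (rescale 2 E + 1) * h2
    + 2 * (X : ℚ⟦X⟧) * (rescale 2 E - 1) * kN2

lemma sum_even_helper {R : Type*} [AddCommMonoid R] (f : ℕ → R) (h : ∀ i, f (2*i+1) = 0)
    (k : ℕ) : ∑ i ∈ range (2*k+1), f i = ∑ j ∈ range (k+1), f (2*j) := by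
  induction k with
  | zero => simp
  | succ k ih =>
    have e1 : 2*(k+1)+1 = (2*k+1)+1+1 := by omega
    have e2 : 2*k+1+1 = 2*(k+1) := by omega
    rw [e1, sum_range_succ, sum_range_succ, ih, h k, add_zero, e2]
    exact (sum_range_succ _ (k+1)).symm

lemma coeff_A (i : ℕ) : (PowerSeries.coeff i) (rescale (4:ℚ) B - rescale 2 B + X)
    = ((4:ℚ)^i - 2^i) * (bernoulli i / i.factorial) + (PowerSeries.coeff i) X := by
  simp only [map_add, map_sub, PowerSeries.coeff_rescale, bernoulliPowerSeries,
    PowerSeries.coeff_mk, Algebra.algebraMap_self, RingHom.id_apply]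
  ring

lemma coeff_EC (j : ℕ) : (PowerSeries.coeff j) (E + rescale (-1) E)
    = (1 + (-1)^j) / j.factorial := by
  simp only [map_add, PowerSeries.coeff_rescale, PowerSeries.coeff_exp, Algebra.algebraMap_self,
    RingHom.id_apply]
  ring

lemma bern_sum (n : ℕ) :
    ∑ j ∈ range (n+2), ((16:ℚ)^j - 4^j) * bernoulli (2*j) /
      ((2*j).factorial * (2*n+2-2*j).factorial) = 1/(2*n+1).factorial := by
  have h := congrArg (PowerSeries.coeff (2*n+2)) aux_ps
  rw [PowerSeries.coeff_mul, Nat.sum_antidiagonal_eq_sum_range_succ_mk,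
    show 2*n+2 = (2*n+1)+1 from rfl, PowerSeries.coeff_succ_X_mul] at h
  have hR : (PowerSeries.coeff (2*n+1)) (E - rescale (-1) E) = 2 / (2*n+1).factorial := by
    simp only [map_sub, PowerSeries.coeff_rescale, PowerSeries.coeff_exp, Algebra.algebraMap_self,
      RingHom.id_apply, pow_succ, pow_mul, neg_one_sq, one_pow]
    ring
  rw [hR] at h
  have heven := sum_even_helper
    (fun i => (PowerSeries.coeff i) (rescale (4:ℚ) B - rescale 2 B + X)
      * (PowerSeries.coeff (2*n+1+1-i)) (E + rescale (-1) E)) ?_ (n+1)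
  · rw [show 2*(n+1)+1 = (2*n+1)+1+1 from by omega] at heven
    rw [heven] at h
    have hcon : ∀ j ∈ range (n+2),
        (PowerSeries.coeff (2*j)) (rescale (4:ℚ) B - rescale 2 B + X)
          * (PowerSeries.coeff (2*n+1+1-2*j)) (E + rescale (-1) E)
        = 2 * (((16:ℚ)^j - 4^j) * bernoulli (2*j) /
            ((2*j).factorial * (2*n+2-2*j).factorial)) := by
      intro j hj
      simp only [mem_range] at hj
      rw [coeff_A, coeff_EC]
      have hX : (PowerSeries.coeff (2*j)) (X : ℚ⟦X⟧) = 0 := by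
        rw [PowerSeries.coeff_X, if_neg (by omega)]
      have hsgn : (-1:ℚ)^(2*n+1+1-2*j) = 1 := Even.neg_one_pow (by rw [Nat.even_iff]; omega)
      rw [hX, add_zero, pow_mul, pow_mul, hsgn,
        show 2*n+1+1-2*j = 2*n+2-2*j from by omega]
      norm_num
      have h1 : ((2*j).factorial : ℚ) ≠ 0 := Nat.cast_ne_zero.2 (Nat.factorial_ne_zero _)
      have h2 : ((2*n+2-2*j).factorial : ℚ) ≠ 0 := Nat.cast_ne_zero.2 (Nat.factorial_ne_zero _)
      field_simp
    rw [sum_congr rfl hcon, ← mul_sum] at h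
    have h2 : ((2*n+1).factorial : ℚ) ≠ 0 := Nat.cast_ne_zero.2 (Nat.factorial_ne_zero _)
    field_simp at h ⊢
    linarith [h]
  · intro i
    show (PowerSeries.coeff (2*i+1)) (rescale (4:ℚ) B - rescale 2 B + X)
      * (PowerSeries.coeff (2*n+1+1-(2*i+1))) (E + rescale (-1) E) = 0
    by_cases hc : 2*i+1 ≤ 2*n+1
    · have hz : (PowerSeries.coeff (2*n+1+1-(2*i+1))) (E + rescale (-1) E) = 0 := by
        rw [coeff_EC, show 2*n+1+1-(2*i+1) = 2*(n-i)+1 from by omega, pow_succ, pow_mul,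
          neg_one_sq, one_pow]
        norm_num
      rw [hz, mul_zero]
    · have hb : (PowerSeries.coeff (2*i+1)) (rescale (4:ℚ) B - rescale 2 B + X) = 0 := by
        rw [coeff_A, PowerSeries.coeff_X, if_neg (by omega)]
        rw [bernoulli_eq_bernoulli'_of_ne_one (by omega),
          bernoulli'_eq_zero_of_odd ⟨i, by omega⟩ (by omega)]
        simp
      rw [hb, zero_mul]

end PSsection

lemma lambda_eq (k : ℕ) (hk : k ≠ 0) :
    dirichletLambda (2*k) = (-1:ℝ)^(k+1) * (2^(2*k) - 1) * π^(2*k) *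
      (bernoulli (2*k) : ℝ) / (2*(2*k).factorial) := by
  have hz := hasSum_zeta_nat hk
  set Z := ((-1:ℝ)^(k+1) * 2^(2*k-1) * π^(2*k) * (bernoulli (2*k):ℝ) / (2*k).factorial) with hZ
  have he : HasSum (fun n : ℕ => 1/(((2*n : ℕ)):ℝ)^(2*k)) ((1/2^(2*k)) * Z) := by
    have h := hz.mul_left (1/2^(2*k) : ℝ)
    rw [show (fun n : ℕ => 1/(((2*n : ℕ)):ℝ)^(2*k))
        = fun i : ℕ => 1 / 2 ^ (2 * k) * (1 / (i:ℝ) ^ (2 * k)) from ?_]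
    · exact h
    funext n
    push_cast
    rw [mul_pow]
    rw [one_div, one_div, one_div, mul_inv]
  have hsum : Summable (fun n : ℕ => 1/(((2*n+1 : ℕ)):ℝ)^(2*k)) :=
    hz.summable.comp_injective (fun a b hab => by omega)
  have ho := hsum.hasSum
  have hlam : dirichletLambda (2*k) = ∑' n : ℕ, 1/(((2*n+1 : ℕ)):ℝ)^(2*k) := by
    unfold dirichletLambda
    congr 1 with n
    push_cast
    ring_nf
  rw [← hlam] at ho
  have huniq := (he.even_add_odd ho).unique hz
  have h2 : (2:ℝ)^(2*k-1) = 2^(2*k)/2 := by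
    rw [eq_div_iff (two_ne_zero' ℝ), ← pow_succ]
    congr 1
    omega
  have hf : ((2*k).factorial : ℝ) ≠ 0 := Nat.cast_ne_zero.2 (Nat.factorial_ne_zero _)
  have hp : (2:ℝ)^(2*k) ≠ 0 := by positivity
  have hval : dirichletLambda (2*k) = Z - 1/2^(2*k) * Z := by linarith [huniq]
  rw [hval, hZ, h2]
  field_simp

lemma bern_sum_real (M : ℕ) :
    ∑ j ∈ range (M+1), ((16:ℝ)^(j+1) - 4^(j+1)) * (bernoulli (2*j+2):ℝ) /
      ((2*j+2).factorial * (2*(M-j)).factorial) = 1/(2*M+1).factorial := by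
  have h0 := congrArg (fun q : ℚ => (q : ℝ)) (bern_sum M)
  push_cast at h0
  rw [Finset.sum_range_succ'] at h0
  simp only [pow_zero, sub_self, zero_mul, zero_div, add_zero] at h0
  rw [← h0]
  refine Finset.sum_congr rfl fun j hj => ?_
  simp only [mem_range] at hj
  have e1 : 2*(j+1) = 2*j+2 := by omega
  have e2 : 2*M+2-(2*j+2) = 2*(M-j) := by omega
  rw [e1, e2]

lemma star (M : ℕ) :
    ∑ i ∈ range (M+1), (-1:ℝ)^i * π^(2*i) / (4^i * (2*i).factorial)
      * dirichletLambda (2*(M-i)+2)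
    = (-1:ℝ)^M * π^(2*M+2) / (2^(2*M+3) * (2*M+1).factorial) := by
  rw [← Finset.sum_range_reflect]
  have hcon : ∀ j ∈ range (M+1),
      (-1:ℝ)^(M+1-1-j) * π^(2*(M+1-1-j)) / (4^(M+1-1-j) * (2*(M+1-1-j)).factorial)
        * dirichletLambda (2*(M-(M+1-1-j))+2)
      = ((-1:ℝ)^M * π^(2*M+2) / 2^(2*M+3)) *
        (((16:ℝ)^(j+1) - 4^(j+1)) * (bernoulli (2*j+2):ℝ) /
          ((2*j+2).factorial * (2*(M-j)).factorial)) := by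
    intro j hj
    simp only [mem_range] at hj
    obtain ⟨K, hK⟩ : ∃ K, M = K + j := ⟨M - j, by omega⟩
    subst hK
    rw [show K+j+1-1-j = K from by omega, show K+j-K = j from by omega,
      show K+j-j = K from by omega]
    have hl := lambda_eq (j+1) (Nat.succ_ne_zero j)
    rw [show 2*(j+1) = 2*j+2 from by omega] at hl
    rw [hl]
    have h1 : ((2*K).factorial : ℝ) ≠ 0 := Nat.cast_ne_zero.2 (Nat.factorial_ne_zero _)
    have h2 : ((2*j+2).factorial : ℝ) ≠ 0 := Nat.cast_ne_zero.2 (Nat.factorial_ne_zero _)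
    have p1 : (2:ℝ)^(2*(K+j)+3) = 8 * (4^K * 4^j) := by
      rw [pow_add, pow_mul, pow_add]
      norm_num
      ring
    have p2 : (16:ℝ)^(j+1) = (4^j)^2 * 16 := by
      rw [show (16:ℝ) = 4^2 from by norm_num, ← pow_mul, show 2*(j+1) = j*2+2 from by omega,
        pow_add, pow_mul]
    have p3 : (2:ℝ)^(2*j+2) = 4^j * 4 := by
      rw [pow_add, pow_mul]
      norm_num
    have p4 : (4:ℝ)^(j+1) = 4^j * 4 := by rw [pow_succ]
    rw [p1, p2, p3, p4]
    have h4 : (4:ℝ)^j ≠ 0 := by positivity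
    have h5 : (4:ℝ)^K ≠ 0 := by positivity
    field_simp
    ring
  rw [Finset.sum_congr rfl hcon, ← Finset.mul_sum, bern_sum_real M]
  have h2 : ((2*M+1).factorial : ℝ) ≠ 0 := Nat.cast_ne_zero.2 (Nat.factorial_ne_zero _)
  field_simp

lemma star_c (M : ℕ) :
    ∑ i ∈ range (M+1), (-1:ℂ)^i * (π:ℂ)^(2*i) / (4^i * (2*i).factorial)
      * (dirichletLambda (2*(M-i)+2) : ℂ)
    = (-1:ℂ)^M * (π:ℂ)^(2*M+2) / (2^(2*M+3) * (2*M+1).factorial) := by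
  have h := congrArg (fun r : ℝ => (r:ℂ)) (star M)
  push_cast at h
  exact h

lemma binom_even_sum (u : ℂ) (k : ℕ) :
    ∑ j ∈ range (k+1), u^(2*j) * ((2*k).choose (2*j) : ℂ)
      = ((u+1)^(2*k) + (u-1)^(2*k)) / 2 := by
  have key : (u+1)^(2*k) + (u-1)^(2*k)
      = ∑ i ∈ range (2*k+1), u^i * ((1:ℂ) + (-1)^(2*k-i)) * ((2*k).choose i : ℂ) := by
    rw [add_pow, sub_eq_add_neg, add_pow, ← sum_add_distrib]
    refine sum_congr rfl fun i _ => ?_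
    rw [one_pow]
    ring
  rw [eq_div_iff (two_ne_zero' ℂ), key,
    sum_even_helper (fun i => u^i * ((1:ℂ) + (-1)^(2*k-i)) * ((2*k).choose i : ℂ)) ?_ k]
  · rw [Finset.sum_mul]
    refine sum_congr rfl fun j hj => ?_
    simp only [mem_range] at hj
    have he : ((-1:ℂ))^(2*k-2*j) = 1 := Even.neg_one_pow (by rw [Nat.even_iff]; omega)
    rw [he]
    ring
  · intro i
    show u^(2*i+1) * ((1:ℂ) + (-1)^(2*k-(2*i+1))) * ((2*k).choose (2*i+1) : ℂ) = 0
    by_cases hc : 2*i+1 ≤ 2*k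
    · have ho : ((-1:ℂ))^(2*k-(2*i+1)) = -1 := Odd.neg_one_pow ⟨k-i-1, by omega⟩
      rw [ho]
      ring
    · rw [Nat.choose_eq_zero_of_lt (by omega)]
      simp

lemma binom_odd_sum (u : ℂ) (m : ℕ) :
    ∑ j ∈ range (m+1), u^(2*j) * ((2*m+1).choose (2*j) : ℂ)
      = ((u+1)^(2*m+1) - (u-1)^(2*m+1)) / 2 := by
  have key : (u+1)^(2*m+1) - (u-1)^(2*m+1)
      = ∑ i ∈ range (2*(m+1)+1), u^i * ((1:ℂ) - (-1)^(2*m+1-i)) * ((2*m+1).choose i : ℂ) := by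
    rw [show 2*(m+1)+1 = (2*m+1+1)+1 from by omega, sum_range_succ,
      Nat.choose_eq_zero_of_lt (show 2*m+1 < 2*m+1+1 by omega)]
    rw [add_pow, sub_eq_add_neg u, add_pow, ← sum_sub_distrib]
    simp only [Nat.cast_zero, mul_zero, add_zero]
    refine (sum_congr rfl fun i _ => ?_)
    rw [one_pow]
    ring
  rw [eq_div_iff (two_ne_zero' ℂ), key,
    sum_even_helper (fun i => u^i * ((1:ℂ) - (-1)^(2*m+1-i)) * ((2*m+1).choose i : ℂ)) ?_ (m+1)]
  · conv_rhs => rw [sum_range_succ]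
    rw [Nat.choose_eq_zero_of_lt (show 2*m+1 < 2*(m+1) by omega)]
    simp only [Nat.cast_zero, mul_zero, add_zero]
    rw [Finset.sum_mul]
    refine sum_congr rfl fun j hj => ?_
    simp only [mem_range] at hj
    have ho : ((-1:ℂ))^(2*m+1-2*j) = -1 := Odd.neg_one_pow ⟨m-j, by omega⟩
    rw [ho]
    ring
  · intro i
    show u^(2*i+1) * ((1:ℂ) - (-1)^(2*m+1-(2*i+1))) * ((2*m+1).choose (2*i+1) : ℂ) = 0
    by_cases hc : 2*i+1 ≤ 2*m+1
    · have he : ((-1:ℂ))^(2*m+1-(2*i+1)) = 1 := Even.neg_one_pow (by rw [Nat.even_iff]; omega)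
      rw [he]
      ring
    · rw [Nat.choose_eq_zero_of_lt (by omega)]
      simp

lemma stepA (α : ℂ) (k : ℕ) :
    ∑ j ∈ range (k+1),
      (2*(-1:ℂ)^j*(2*α-1)^(2*j)*(π:ℂ)^(2*j)/(4^j*(2*j).factorial)) *
        ((-1:ℂ)^(k-j)*(π:ℂ)^(2*(k-j))/(4^(k-j)*(2*(k-j)).factorial))
    = (-1:ℂ)^k * (α^(2*k)+(α-1)^(2*k)) * ((π:ℂ)^(2*k)/((2*k).factorial)) := by
  have hper : ∀ j ∈ range (k+1),
      (2*(-1:ℂ)^j*(2*α-1)^(2*j)*(π:ℂ)^(2*j)/(4^j*(2*j).factorial)) *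
        ((-1:ℂ)^(k-j)*(π:ℂ)^(2*(k-j))/(4^(k-j)*(2*(k-j)).factorial))
      = (2*(-1:ℂ)^k*(π:ℂ)^(2*k)/(4^k*(2*k).factorial)) *
        ((2*α-1)^(2*j) * ((2*k).choose (2*j) : ℂ)) := by
    intro j hj
    simp only [mem_range] at hj
    obtain ⟨K, rfl⟩ : ∃ K, k = j + K := ⟨k-j, by omega⟩
    rw [show j+K-j = K from by omega]
    have hcf : (((2*(j+K)).factorial : ℕ) : ℂ)
        = ((2*(j+K)).choose (2*j) : ℂ) * ((2*j).factorial : ℂ) * ((2*K).factorial : ℂ) := by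
      have h := Nat.choose_mul_factorial_mul_factorial (show 2*j ≤ 2*(j+K) by omega)
      rw [show 2*(j+K)-2*j = 2*K from by omega] at h
      exact_mod_cast h.symm
    rw [hcf]
    have h1 : ((2*j).factorial : ℂ) ≠ 0 := Nat.cast_ne_zero.2 (Nat.factorial_ne_zero _)
    have h2 : ((2*K).factorial : ℂ) ≠ 0 := Nat.cast_ne_zero.2 (Nat.factorial_ne_zero _)
    have h3 : (4:ℂ)^j ≠ 0 := by norm_num
    have h4 : (4:ℂ)^K ≠ 0 := by norm_num
    have h5 : ((2*(j+K)).choose (2*j) : ℂ) ≠ 0 :=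
      Nat.cast_ne_zero.2 (Nat.choose_pos (by omega)).ne'
    field_simp
    ring
  rw [sum_congr rfl hper, ← mul_sum, binom_even_sum (2*α-1) k,
    show (2*α-1+1) = 2*α from by ring, show (2*α-1-1) = 2*(α-1) from by ring,
    mul_pow, mul_pow, show (2:ℂ)^(2*k) = 4^k from by rw [pow_mul]; norm_num]
  have h3 : (4:ℂ)^k ≠ 0 := by norm_num
  have h1 : ((2*k).factorial : ℂ) ≠ 0 := Nat.cast_ne_zero.2 (Nat.factorial_ne_zero _)
  field_simp

lemma stepB (α : ℂ) (m : ℕ) :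
    ∑ j ∈ range (m+1),
      (2*(-1:ℂ)^j*(2*α-1)^(2*j)*(π:ℂ)^(2*j)/(4^j*(2*j).factorial)) *
        ((-1:ℂ)^(m-j)*(π:ℂ)^(2*(m-j)+2)/(2^(2*(m-j)+3)*(2*(m-j)+1).factorial))
    = (-1:ℂ)^m * (α^(2*m+1)-(α-1)^(2*m+1)) * (π:ℂ)^(2*m+2)/(4*(2*m+1).factorial) := by
  have hper : ∀ j ∈ range (m+1),
      (2*(-1:ℂ)^j*(2*α-1)^(2*j)*(π:ℂ)^(2*j)/(4^j*(2*j).factorial)) *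
        ((-1:ℂ)^(m-j)*(π:ℂ)^(2*(m-j)+2)/(2^(2*(m-j)+3)*(2*(m-j)+1).factorial))
      = (2*(-1:ℂ)^m*(π:ℂ)^(2*m+2)/(2^(2*m+3)*(2*m+1).factorial)) *
        ((2*α-1)^(2*j) * ((2*m+1).choose (2*j) : ℂ)) := by
    intro j hj
    simp only [mem_range] at hj
    obtain ⟨K, rfl⟩ : ∃ K, m = j + K := ⟨m-j, by omega⟩
    rw [show j+K-j = K from by omega]
    have hcf : (((2*(j+K)+1).factorial : ℕ) : ℂ)
        = ((2*(j+K)+1).choose (2*j) : ℂ) * ((2*j).factorial : ℂ) * ((2*K+1).factorial : ℂ) := by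
      have h := Nat.choose_mul_factorial_mul_factorial (show 2*j ≤ 2*(j+K)+1 by omega)
      rw [show 2*(j+K)+1-2*j = 2*K+1 from by omega] at h
      exact_mod_cast h.symm
    rw [hcf, show (2:ℂ)^(2*(j+K)+3) = 4^j * 2^(2*K+3) from by
      rw [show 2*(j+K)+3 = 2*j+(2*K+3) from by omega, pow_add, pow_mul]; norm_num]
    have h1 : ((2*j).factorial : ℂ) ≠ 0 := Nat.cast_ne_zero.2 (Nat.factorial_ne_zero _)
    have h2 : ((2*K+1).factorial : ℂ) ≠ 0 := Nat.cast_ne_zero.2 (Nat.factorial_ne_zero _)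
    have h3 : (4:ℂ)^j ≠ 0 := by norm_num
    have h4 : (2:ℂ)^(2*K+3) ≠ 0 := by norm_num
    have h5 : ((2*(j+K)+1).choose (2*j) : ℂ) ≠ 0 :=
      Nat.cast_ne_zero.2 (Nat.choose_pos (by omega)).ne'
    field_simp
    ring
  rw [sum_congr rfl hper, ← mul_sum, binom_odd_sum (2*α-1) m,
    show (2*α-1+1) = 2*α from by ring, show (2*α-1-1) = 2*(α-1) from by ring,
    mul_pow, mul_pow, show (2:ℂ)^(2*m+3) = 2^(2*m+1) * 4 from by ring]
  have h3 : (2:ℂ)^(2*m+1) ≠ 0 := by norm_num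
  have h1 : ((2*m+1).factorial : ℂ) ≠ 0 := Nat.cast_ne_zero.2 (Nat.factorial_ne_zero _)
  field_simp


theorem lambda_recurrence_family_even (m : ℕ) (α : ℂ) :
    (-1 : ℂ) ^ (m + 1) * ((α ^ (2 * m + 1) - (α - 1) ^ (2 * m + 1)) / 4) *
        ((π : ℂ) ^ (2 * m + 2) / (Nat.factorial (2 * m + 1))) +
      ∑ k ∈ Finset.range (m + 1),
        (-1 : ℂ) ^ k * (α ^ (2 * k) + (α - 1) ^ (2 * k)) *
          ((π : ℂ) ^ (2 * k) / (Nat.factorial (2 * k))) *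
            (dirichletLambda (2 * m - 2 * k + 2) : ℂ) = 0 := by
  have hsum : ∑ k ∈ Finset.range (m + 1),
        (-1 : ℂ) ^ k * (α ^ (2 * k) + (α - 1) ^ (2 * k)) *
          ((π : ℂ) ^ (2 * k) / (Nat.factorial (2 * k))) *
            (dirichletLambda (2 * m - 2 * k + 2) : ℂ)
      = ∑ k ∈ Finset.range (m + 1), ∑ j ∈ range (k+1),
          (2*(-1:ℂ)^j*(2*α-1)^(2*j)*(π:ℂ)^(2*j)/(4^j*(2*j).factorial)) *
            ((-1:ℂ)^(k-j)*(π:ℂ)^(2*(k-j))/(4^(k-j)*(2*(k-j)).factorial)) *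
              (dirichletLambda (2*(m-k)+2) : ℂ) := by
    refine sum_congr rfl fun k hk => ?_
    simp only [mem_range] at hk
    rw [show 2*m-2*k+2 = 2*(m-k)+2 from by omega, ← stepA α k, Finset.sum_mul]
  rw [hsum]
  -- swap the double sum
  rw [Finset.sum_comm' (t' := range (m+1)) (s' := fun j => Ico j (m+1))
    (by intro x y; simp only [mem_range, mem_Ico]; omega)]
  have hinner : ∀ j ∈ range (m+1),
      ∑ k ∈ Ico j (m+1),
        (2*(-1:ℂ)^j*(2*α-1)^(2*j)*(π:ℂ)^(2*j)/(4^j*(2*j).factorial)) *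
          ((-1:ℂ)^(k-j)*(π:ℂ)^(2*(k-j))/(4^(k-j)*(2*(k-j)).factorial)) *
            (dirichletLambda (2*(m-k)+2) : ℂ)
      = (2*(-1:ℂ)^j*(2*α-1)^(2*j)*(π:ℂ)^(2*j)/(4^j*(2*j).factorial)) *
          ((-1:ℂ)^(m-j)*(π:ℂ)^(2*(m-j)+2)/(2^(2*(m-j)+3)*(2*(m-j)+1).factorial)) := by
    intro j hj
    simp only [mem_range] at hj
    rw [Finset.sum_Ico_eq_sum_range]
    have hterm : ∀ i ∈ range (m+1-j),
        (2*(-1:ℂ)^j*(2*α-1)^(2*j)*(π:ℂ)^(2*j)/(4^j*(2*j).factorial)) *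
          ((-1:ℂ)^(j+i-j)*(π:ℂ)^(2*(j+i-j))/(4^(j+i-j)*(2*(j+i-j)).factorial)) *
            (dirichletLambda (2*(m-(j+i))+2) : ℂ)
        = (2*(-1:ℂ)^j*(2*α-1)^(2*j)*(π:ℂ)^(2*j)/(4^j*(2*j).factorial)) *
          ((-1:ℂ)^i*(π:ℂ)^(2*i)/(4^i*(2*i).factorial) *
            (dirichletLambda (2*((m-j)-i)+2) : ℂ)) := by
      intro i hi
      simp only [mem_range] at hi
      rw [show j+i-j = i from by omega, show m-(j+i) = (m-j)-i from by omega]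
      ring
    rw [sum_congr rfl hterm, ← mul_sum, show m+1-j = (m-j)+1 from by omega, star_c (m-j)]
  rw [sum_congr rfl hinner, stepB α m]
  ring
end

section
/- Let m be a positive integer. Then λ(2m) = (-1)^{m-1} ( π^{2m}/(2^{2m+1}·(2m-1)!) + Σ_{k=1}^{m-1} (-1)^{m-k} · π^{2k}/(2^{2k}·(2k)!) · λ(2m-2k) ). -/
open Real Finset PowerSeries

lemma sum_range_even_split {M : Type*} [AddCommMonoid M] (g : ℕ → M) (N : ℕ)
    (h : ∀ k, Odd k → k < 2*N+1 → g k = 0) :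
    ∑ k ∈ Finset.range (2*N+1), g k = ∑ j ∈ Finset.range (N+1), g (2*j) := by
  induction N with
  | zero => simp
  | succ n ih =>
      have h1 : 2*(n+1)+1 = (2*n+1) + 1 + 1 := by ring
      have h2 : ∀ k, Odd k → k < 2*n+1 → g k = 0 := fun k hk hk2 => h k hk (by omega)
      rw [h1, Finset.sum_range_succ, Finset.sum_range_succ, ih h2,
        h (2*n+1) ⟨n, by ring⟩ (by omega), add_zero,
        show 2*n+1+1 = 2*(n+1) by ring, Finset.sum_range_succ (fun j => g (2*j)) (n+1)]

lemma ps_key (n : ℕ) :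
    (rescale (4:ℚ) (bernoulliPowerSeries ℚ) - rescale 2 (bernoulliPowerSeries ℚ)) *
        (exp ℚ + rescale (-1:ℚ) (exp ℚ)) + 2 * X * rescale (-1:ℚ) (exp ℚ) = 0 := by
  have he : exp ℚ * rescale (-1:ℚ) (exp ℚ) = 1 := by
    simpa [evalNegHom] using (exp_mul_exp_neg_eq_one (A := ℚ))
  have hE4 : rescale (4:ℚ) (exp ℚ) = exp ℚ ^ 4 := by
    rw [exp_pow_eq_rescale_exp]; norm_num
  have hE2 : rescale (2:ℚ) (exp ℚ) = exp ℚ ^ 2 := by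
    rw [exp_pow_eq_rescale_exp]; norm_num
  have hB := bernoulliPowerSeries_mul_exp_sub_one ℚ
  have hB4 : rescale (4:ℚ) (bernoulliPowerSeries ℚ) * (exp ℚ ^ 4 - 1) = 4 * X := by
    have := congrArg (rescale (4:ℚ)) hB
    rw [map_mul, map_sub, map_one, hE4, rescale_X] at this
    rw [this]; rw [show ((C 4 : ℚ⟦X⟧)) = 4 from map_ofNat _ 4]
  have hB2 : rescale (2:ℚ) (bernoulliPowerSeries ℚ) * (exp ℚ ^ 2 - 1) = 2 * X := by
    have := congrArg (rescale (2:ℚ)) hB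
    rw [map_mul, map_sub, map_one, hE2, rescale_X] at this
    rw [this]; rw [show ((C 2 : ℚ⟦X⟧)) = 2 from map_ofNat _ 2]
  have hD : ((exp ℚ)^4 - 1) * ((exp ℚ)^2 - 1) ≠ 0 := by
    apply mul_ne_zero
    · intro h
      have := congrArg (coeff 1) h
      rw [← hE4] at this
      simp [coeff_rescale, coeff_exp] at this
    · intro h
      have := congrArg (coeff 1) h
      rw [← hE2] at this
      simp [coeff_rescale, coeff_exp] at this
  apply (mul_eq_zero.mp ?_).resolve_right hD
  linear_combination ((exp ℚ ^ 2 - 1) * (exp ℚ + rescale (-1:ℚ) (exp ℚ))) * hB4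
    - ((exp ℚ ^ 4 - 1) * (exp ℚ + rescale (-1:ℚ) (exp ℚ))) * hB2
    + (2*X*(exp ℚ) - 4*X*(exp ℚ)^3 + 2*X*(exp ℚ)^5) * he

lemma bernoulli_sum_aux (n : ℕ) :
    ∑ j ∈ Finset.range (n+2), ((16:ℚ)^j - 4^j) * bernoulli (2*j) / ((2*j).factorial * (2*n+2-2*j).factorial)
      = 1 / (2*n+1).factorial := by
  have key := congrArg (coeff (2*n+2)) (ps_key n)
  rw [map_zero, map_add] at key
  have hxf : coeff (2*n+2) (2 * X * rescale (-1:ℚ) (exp ℚ) : ℚ⟦X⟧) = -(2/(2*n+1).factorial : ℚ) := by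
    rw [show (2 * X * rescale (-1:ℚ) (exp ℚ) : ℚ⟦X⟧) = X * (2 * rescale (-1:ℚ) (exp ℚ)) by ring,
      show 2*n+2 = (2*n+1)+1 from rfl, coeff_succ_X_mul]
    rw [show ((2:ℚ⟦X⟧) * rescale (-1:ℚ) (exp ℚ)) = rescale (-1:ℚ) (exp ℚ) + rescale (-1:ℚ) (exp ℚ) by ring,
      map_add, coeff_rescale, coeff_exp,
      show ((-1:ℚ))^(2*n+1) = -1 by rw [pow_succ, pow_mul]; norm_num]
    simp
    ring
  have hmul : coeff (2*n+2) ((rescale (4:ℚ) (bernoulliPowerSeries ℚ) - rescale 2 (bernoulliPowerSeries ℚ)) * (exp ℚ + rescale (-1:ℚ) (exp ℚ)))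
      = ∑ k ∈ Finset.range (2*(n+1)+1), ((4:ℚ)^k - 2^k) * (bernoulli k / k.factorial) * ((1 + (-1)^(2*n+2-k)) / (2*n+2-k).factorial) := by
    rw [coeff_mul, Finset.Nat.sum_antidiagonal_eq_sum_range_succ_mk]
    apply Finset.sum_congr (by congr 1)
    intro k hk
    simp only [map_sub, map_add, coeff_rescale, bernoulliPowerSeries, coeff_mk, coeff_exp,
      Algebra.algebraMap_self, RingHom.id_apply]
    ring
  rw [hmul, hxf] at key
  rw [sum_range_even_split _ (n+1) ?_] at key
  · have hfac : ((2*n+1).factorial : ℚ) ≠ 0 := Nat.cast_ne_zero.mpr (Nat.factorial_ne_zero _)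
    have hterm : ∀ j ∈ Finset.range (n+1+1),
        ((4:ℚ)^(2*j) - 2^(2*j)) * (bernoulli (2*j) / (2*j).factorial) * ((1 + (-1)^(2*n+2-2*j)) / (2*n+2-2*j).factorial)
          = 2 * (((16:ℚ)^j - 4^j) * bernoulli (2*j) / ((2*j).factorial * (2*n+2-2*j).factorial)) := by
      intro j hj
      have hje : j ≤ n+1 := by simpa using Nat.lt_succ_iff.mp (Finset.mem_range.mp hj)
      have h1 : 2*n+2-2*j = 2*(n+1-j) := by omega
      rw [h1, show ((-1:ℚ))^(2*(n+1-j)) = 1 by rw [pow_mul]; norm_num]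
      have h2 : (4:ℚ)^(2*j) = 16^j := by rw [pow_mul]; norm_num
      have h3 : (2:ℚ)^(2*j) = 4^j := by rw [pow_mul]; norm_num
      rw [h2, h3]
      have hf1 : ((2*j).factorial : ℚ) ≠ 0 := Nat.cast_ne_zero.mpr (Nat.factorial_ne_zero _)
      have hf2 : ((2*(n+1-j)).factorial : ℚ) ≠ 0 := Nat.cast_ne_zero.mpr (Nat.factorial_ne_zero _)
      field_simp
      ring
    rw [Finset.sum_congr rfl hterm, ← Finset.mul_sum] at key
    have h2 : (2:ℚ) ≠ 0 := two_ne_zero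
    have key2 : (2:ℚ) * ∑ j ∈ Finset.range (n+2), ((16:ℚ)^j - 4^j) * bernoulli (2*j) / ((2*j).factorial * (2*n+2-2*j).factorial) = 2 * (1/(2*n+1).factorial) := by
      rw [mul_one_div]
      linarith [key]
    exact mul_left_cancel₀ h2 key2
  · intro k hk hk2
    obtain ⟨t, rfl⟩ := hk
    have h1 : 2*n+2-(2*t+1) = 2*(n-t)+1 := by omega
    rw [h1, show ((-1:ℚ))^(2*(n-t)+1) = -1 by rw [pow_succ, pow_mul]; norm_num]
    norm_num

lemma bracket_sum (n : ℕ) :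
    ((4:ℚ)^(n+1) - 1) * bernoulli (2*(n+1)) / (2 * (2*(n+1)).factorial)
      + ∑ k ∈ Finset.Icc 1 n, ((4:ℚ)^(n+1-k) - 1) * bernoulli (2*(n+1-k)) /
          (2^(2*k+1) * (2*k).factorial * (2*(n+1-k)).factorial)
      = 1 / (2^(2*(n+1)+1) * (2*n+1).factorial) := by
  have hins : Finset.range (n+1) = insert 0 (Finset.Icc 1 n) := by
    ext x; simp only [Finset.mem_range, Finset.mem_insert, Finset.mem_Icc]; omega
  have hrange : ∑ k ∈ Finset.range (n+1), ((4:ℚ)^(n+1-k) - 1) * bernoulli (2*(n+1-k)) /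
          (2^(2*k+1) * (2*k).factorial * (2*(n+1-k)).factorial)
      = ((4:ℚ)^(n+1) - 1) * bernoulli (2*(n+1)) / (2 * (2*(n+1)).factorial)
        + ∑ k ∈ Finset.Icc 1 n, ((4:ℚ)^(n+1-k) - 1) * bernoulli (2*(n+1-k)) /
          (2^(2*k+1) * (2*k).factorial * (2*(n+1-k)).factorial) := by
    rw [hins, Finset.sum_insert (by simp)]
    congr 1
    norm_num [Nat.factorial]
  rw [← hrange]
  have hrefl := Finset.sum_range_reflect
    (fun j => ((16:ℚ)^j - 4^j) * bernoulli (2*j) / ((2*j).factorial * (2*n+2-2*j).factorial)) (n+2)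
  rw [bernoulli_sum_aux n] at hrefl
  rw [Finset.sum_range_succ] at hrefl
  have hlast : ((16:ℚ)^(n+2-1-(n+1)) - 4^(n+2-1-(n+1))) * bernoulli (2*(n+2-1-(n+1))) /
      ((2*(n+2-1-(n+1))).factorial * (2*n+2-2*(n+2-1-(n+1))).factorial) = 0 := by
    norm_num
  rw [hlast, add_zero] at hrefl
  have hterm : ∀ k ∈ Finset.range (n+1),
      ((16:ℚ)^(n+2-1-k) - 4^(n+2-1-k)) * bernoulli (2*(n+2-1-k)) /
        ((2*(n+2-1-k)).factorial * (2*n+2-2*(n+2-1-k)).factorial)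
      = (2 * 4^(n+1)) * (((4:ℚ)^(n+1-k) - 1) * bernoulli (2*(n+1-k)) /
          (2^(2*k+1) * (2*k).factorial * (2*(n+1-k)).factorial)) := by
    intro k hk
    have hkn : k ≤ n := Nat.lt_succ_iff.mp (Finset.mem_range.mp hk)
    rw [show n+2-1-k = n+1-k by omega, show 2*n+2-2*(n+1-k) = 2*k by omega]
    obtain ⟨j, hjk, hsum⟩ : ∃ j, n+1-k = j ∧ j+k = n+1 := ⟨n+1-k, rfl, by omega⟩
    rw [hjk, ← hsum, pow_add]
    have h16 : (16:ℚ)^j = 4^j * 4^j := by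
      rw [show (16:ℚ) = 4*4 by norm_num, mul_pow]
    have h2 : (2:ℚ)^(2*k+1) = 2 * 4^k := by
      rw [pow_succ, pow_mul]; norm_num [mul_comm]
    rw [h16, h2]
    have hf1 : ((2*k).factorial : ℚ) ≠ 0 := Nat.cast_ne_zero.mpr (Nat.factorial_ne_zero _)
    have hf2 : ((2*j).factorial : ℚ) ≠ 0 := Nat.cast_ne_zero.mpr (Nat.factorial_ne_zero _)
    have h4k : (4:ℚ)^k ≠ 0 := pow_ne_zero _ (by norm_num)
    field_simp
  rw [Finset.sum_congr rfl hterm, ← Finset.mul_sum] at hrefl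
  have h2m : (2:ℚ)^(2*(n+1)+1) = 2 * 4^(n+1) := by
    rw [pow_succ, pow_mul]; norm_num [mul_comm]
  rw [h2m]
  have hne : (2:ℚ) * 4^(n+1) ≠ 0 := by positivity
  have hfac : ((2*n+1).factorial : ℚ) ≠ 0 := Nat.cast_ne_zero.mpr (Nat.factorial_ne_zero _)
  field_simp at hrefl ⊢
  linarith [hrefl]

set_option maxHeartbeats 1000000 in
lemma dirichletLambda_eq (j : ℕ) (hj : j ≠ 0) :
    dirichletLambda (2*j)
      = (-1:ℝ)^(j+1) * (4^j - 1) * π^(2*j) * (bernoulli (2*j) : ℝ) / (2 * (2*j).factorial) := by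
  have hZ := hasSum_zeta_nat hj
  have h4 : (4:ℝ)^j ≠ 0 := pow_ne_zero _ (by norm_num)
  have hEv : HasSum (fun n : ℕ => 1/(((2*n : ℕ)):ℝ)^(2*j))
      ((1/(4:ℝ)^j) * ((-1:ℝ)^(j+1) * 2^(2*j-1) * π^(2*j) * (bernoulli (2*j):ℝ) / (2*j).factorial)) := by
    have heq : (fun n : ℕ => 1/(((2*n : ℕ)):ℝ)^(2*j))
        = fun n : ℕ => (1/(4:ℝ)^j) * (1/(n:ℝ)^(2*j)) := by
      funext n
      push_cast
      rw [mul_pow, show (2:ℝ)^(2*j) = 4^j by rw [pow_mul]; norm_num, ← one_div_mul_one_div]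
    rw [heq]
    exact hZ.mul_left _
  have hsO : Summable (fun n : ℕ => 1/(((2*n+1 : ℕ)):ℝ)^(2*j)) := by
    have hinj : Function.Injective (fun n : ℕ => 2*n+1) := fun a b h => by dsimp at h; omega
    exact hZ.summable.comp_injective hinj
  have hO := hsO.hasSum
  have htot := HasSum.even_add_odd (f := fun n : ℕ => 1/(n:ℝ)^(2*j)) hEv hO
  have huniq := htot.unique hZ
  have hdl : dirichletLambda (2*j) = ∑' n : ℕ, 1/(((2*n+1 : ℕ)):ℝ)^(2*j) := by
    unfold dirichletLambda
    congr 1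
    funext n
    push_cast
    ring_nf
  have h2 : (2:ℝ)^(2*j-1) * 2 = 4^j := by
    rw [← pow_succ, show 2*j-1+1 = 2*j by omega, pow_mul]; norm_num
  have h2' : (2:ℝ)^(2*j-1) = 4^j/2 := by linarith
  have hfac : ((2*j).factorial : ℝ) ≠ 0 := Nat.cast_ne_zero.mpr (Nat.factorial_ne_zero _)
  have hts : ∑' n : ℕ, 1/(((2*n+1 : ℕ)):ℝ)^(2*j)
      = ((-1:ℝ)^(j+1) * 2^(2*j-1) * π^(2*j) * (bernoulli (2*j):ℝ) / (2*j).factorial)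
        - (1/(4:ℝ)^j) * ((-1:ℝ)^(j+1) * 2^(2*j-1) * π^(2*j) * (bernoulli (2*j):ℝ) / (2*j).factorial) := by
    linarith [huniq]
  rw [hdl, hts, h2']
  field_simp

theorem lambda_recurrence_lettington_analogue (m : ℕ) (hm : 0 < m) :
    dirichletLambda (2 * m) =
      (-1 : ℝ) ^ (m - 1) *
        (π ^ (2 * m) / (2 ^ (2 * m + 1) * (Nat.factorial (2 * m - 1))) +
          ∑ k ∈ Finset.Icc 1 (m - 1),
            (-1 : ℝ) ^ (m - k) * (π ^ (2 * k) / (2 ^ (2 * k) * (Nat.factorial (2 * k)))) *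
              dirichletLambda (2 * m - 2 * k)) := by
  obtain ⟨n, rfl⟩ : ∃ n, m = n+1 := ⟨m-1, by omega⟩
  have hbr : ((4:ℝ)^(n+1) - 1) * (bernoulli (2*(n+1)) : ℝ) / (2 * (2*(n+1)).factorial)
      + ∑ k ∈ Finset.Icc 1 n, ((4:ℝ)^(n+1-k) - 1) * (bernoulli (2*(n+1-k)) : ℝ) /
          (2^(2*k+1) * (2*k).factorial * (2*(n+1-k)).factorial)
      = 1 / (2^(2*(n+1)+1) * (2*n+1).factorial) := by
    have h2 : (((((4:ℚ)^(n+1) - 1) * bernoulli (2*(n+1)) / (2 * (2*(n+1)).factorial)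
      + ∑ k ∈ Finset.Icc 1 n, ((4:ℚ)^(n+1-k) - 1) * bernoulli (2*(n+1-k)) /
          (2^(2*k+1) * (2*k).factorial * (2*(n+1-k)).factorial)) : ℚ) : ℝ)
        = (((1 / (2^(2*(n+1)+1) * (2*n+1).factorial) : ℚ)) : ℝ) := by
      exact_mod_cast bracket_sum n
    push_cast at h2
    convert h2 using 2
  rw [dirichletLambda_eq (n+1) (by omega)]
  rw [show n+1-1 = n from rfl, show 2*(n+1)-1 = 2*n+1 by omega]
  have hred : ∀ k ∈ Finset.Icc 1 n,
      (-1:ℝ)^(n+1-k) * (π^(2*k)/(2^(2*k) * ((2*k).factorial : ℝ))) * dirichletLambda (2*(n+1) - 2*k)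
      = π^(2*(n+1)) * (-(((4:ℝ)^(n+1-k) - 1) * (bernoulli (2*(n+1-k)) : ℝ) /
          (2^(2*k+1) * (2*k).factorial * (2*(n+1-k)).factorial))) := by
    intro k hk
    obtain ⟨hk1, hk2⟩ := Finset.mem_Icc.mp hk
    rw [show 2*(n+1) - 2*k = 2*(n+1-k) by omega, dirichletLambda_eq (n+1-k) (by omega),
      show 2*(n+1) = 2*k + 2*(n+1-k) by omega, pow_add Real.pi (2*k) (2*(n+1-k)),
      pow_succ ((-1:ℝ)) (n+1-k), pow_succ (2:ℝ) (2*k)]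
    have hf1 : ((2*k).factorial : ℝ) ≠ 0 := Nat.cast_ne_zero.mpr (Nat.factorial_ne_zero _)
    have hf2 : ((2*(n+1-k)).factorial : ℝ) ≠ 0 := Nat.cast_ne_zero.mpr (Nat.factorial_ne_zero _)
    have h2k : (2:ℝ)^(2*k) ≠ 0 := pow_ne_zero _ two_ne_zero
    rcases Nat.even_or_odd (n+1-k) with h | h
    · rw [h.neg_one_pow]
      field_simp
    · rw [h.neg_one_pow]
      field_simp
  rw [Finset.sum_congr rfl hred, ← Finset.mul_sum, Finset.sum_neg_distrib]
  linear_combination ((-1:ℝ)^n * π^(2*(n+1))) * hbr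
end

section
/- Let m be a positive integer and let α be a complex number. Then (-1)^m · π^{2m+2}/(4·(2m)!) · ( (α-1)^{2m} + (α+1)^{2m} - 2α^{2m} ) + Σ_{k=1}^{m} (-1)^k ( (α-1)^{2k-1} - (α+1)^{2k-1} ) · π^{2k}/(2k-1)! · λ(2m-2k+2) = 0. -/
open Real Finset Nat

section AuxLemmas

open Nat PowerSeries


lemma rescale_two_bps :
    rescale (2 : ℚ) (bernoulliPowerSeries ℚ) * (PowerSeries.exp ℚ + 1) = C (2:ℚ) * bernoulliPowerSeries ℚ := by
  have hexp : PowerSeries.exp ℚ - 1 ≠ 0 := by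
    simp only [PowerSeries.exp, PowerSeries.ext_iff, Ne, not_forall]
    use 1
    simp [factorial_ne_zero]
  apply mul_right_cancel₀ hexp
  have h2 : ((2 : ℕ) : ℚ) = (2 : ℚ) := by norm_num
  have h1 : (PowerSeries.exp ℚ + 1) * (PowerSeries.exp ℚ - 1) = rescale (2 : ℚ) (PowerSeries.exp ℚ) - 1 := by
    rw [← h2, ← exp_pow_eq_rescale_exp]
    ring
  have hX : rescale (2 : ℚ) X = C (2:ℚ) * X := by
    ext n
    simp only [coeff_rescale, coeff_X, coeff_C_mul]
    split_ifs with h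
    · subst h; ring
    · ring
  calc rescale (2:ℚ) (bernoulliPowerSeries ℚ) * (PowerSeries.exp ℚ + 1) * (PowerSeries.exp ℚ - 1)
      = rescale (2:ℚ) (bernoulliPowerSeries ℚ) * (rescale (2:ℚ) (PowerSeries.exp ℚ) - 1) := by
        rw [mul_assoc, h1]
    _ = rescale (2:ℚ) (bernoulliPowerSeries ℚ * (PowerSeries.exp ℚ - 1)) := by
        rw [map_mul, map_sub, map_one]
    _ = C (2:ℚ) * X := by rw [bernoulliPowerSeries_mul_exp_sub_one, hX]
    _ = C (2:ℚ) * (bernoulliPowerSeries ℚ * (PowerSeries.exp ℚ - 1)) := by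
        rw [bernoulliPowerSeries_mul_exp_sub_one]
    _ = C (2:ℚ) * bernoulliPowerSeries ℚ * (PowerSeries.exp ℚ - 1) := by ring

lemma sum_choose_two_pow_bernoulli (n : ℕ) :
    ∑ i ∈ range (n + 1), (n.choose i : ℚ) * 2 ^ i * bernoulli i
      = (2 - 2 ^ n) * bernoulli n := by
  have H0 : rescale (2:ℚ) (bernoulliPowerSeries ℚ) * PowerSeries.exp ℚ
      + rescale (2:ℚ) (bernoulliPowerSeries ℚ) = (2:ℚ) • bernoulliPowerSeries ℚ := by
    rw [smul_eq_C_mul, ← rescale_two_bps]; ring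
  have H := congrArg (coeff n) H0
  simp only [map_add, coeff_mul, coeff_rescale, bernoulliPowerSeries, coeff_mk, coeff_exp,
    coeff_smul, smul_eq_mul, Algebra.algebraMap_self, RingHom.id_apply, one_div, map_inv₀, map_natCast] at H
  rw [Finset.Nat.sum_antidiagonal_eq_sum_range_succ
    (fun a b => (2:ℚ) ^ a * (bernoulli a / a !) * ((b ! : ℚ))⁻¹)] at H
  have hne : ∀ m : ℕ, (m ! : ℚ) ≠ 0 := fun m => mod_cast factorial_ne_zero m
  have step : ∀ i ∈ range (n + 1), (n.choose i : ℚ) * 2 ^ i * bernoulli i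
      = (n ! : ℚ) * ((2:ℚ) ^ i * (bernoulli i / i !) * (((n - i)! : ℚ))⁻¹) := by
    intro i hi
    rw [mem_range] at hi
    rw [Nat.cast_choose ℚ (by omega : i ≤ n)]
    field_simp
  rw [Finset.sum_congr rfl step, ← Finset.mul_sum]
  have H' : ∑ k ∈ range (n + 1), (2:ℚ) ^ k * (bernoulli k / k !) * (((n - k)! : ℚ))⁻¹
      = 2 * (bernoulli n / n !) - 2 ^ n * (bernoulli n / n !) := by
    linarith [H]
  rw [H']
  field_simp

lemma sum_range_double {G : Type*} [AddCommMonoid G] (f : ℕ → G) (M : ℕ) :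
    ∑ i ∈ range (2 * M), f i = ∑ j ∈ range M, f (2 * j) + ∑ j ∈ range M, f (2 * j + 1) := by
  induction M with
  | zero => simp
  | succ M ih =>
    have h2 : 2 * (M + 1) = 2 * M + 1 + 1 := by ring
    rw [h2, sum_range_succ, sum_range_succ, ih, sum_range_succ, sum_range_succ]
    abel

lemma sum_range_double_succ {G : Type*} [AddCommMonoid G] (f : ℕ → G) (M : ℕ) :
    ∑ i ∈ range (2 * M + 1), f i
      = ∑ j ∈ range (M + 1), f (2 * j) + ∑ j ∈ range M, f (2 * j + 1) := by
  rw [sum_range_succ, sum_range_double, sum_range_succ]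
  abel

lemma bernoulli_odd_zero {j : ℕ} (hj : 1 ≤ j) : bernoulli (2 * j + 1) = 0 := by
  rw [bernoulli_eq_bernoulli'_of_ne_one (by omega)]
  exact bernoulli'_eq_zero_of_odd ⟨j, by ring⟩ (by omega)

lemma core (M : ℕ) (hM : 1 ≤ M) :
    ∑ j ∈ Icc 1 M, ((2 * M + 1).choose (2 * j) : ℚ) * (2 ^ (2 * j) - 1) * bernoulli (2 * j)
      = (2 * M + 1) / 2 := by
  set n := 2 * M + 1 with hn
  have hbn : bernoulli n = 0 := bernoulli_odd_zero hM
  have hA := sum_choose_two_pow_bernoulli n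
  have hB : ∑ i ∈ range (n + 1), (n.choose i : ℚ) * bernoulli i = 0 := by
    rw [sum_range_succ, sum_bernoulli, if_neg (by omega), hbn]
    simp
  have hD : ∑ i ∈ range (n + 1), (n.choose i : ℚ) * (2 ^ i - 1) * bernoulli i = 0 := by
    have : ∑ i ∈ range (n + 1), (n.choose i : ℚ) * (2 ^ i - 1) * bernoulli i
        = ∑ i ∈ range (n + 1), ((n.choose i : ℚ) * 2 ^ i * bernoulli i
            - (n.choose i : ℚ) * bernoulli i) := by
      apply Finset.sum_congr rfl; intro i _; ring
    rw [this, Finset.sum_sub_distrib, hA, hB, hbn]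
    ring
  -- split hD by parity: n + 1 = 2 * (M + 1)
  have hsplit : ∑ i ∈ range (n + 1), (n.choose i : ℚ) * (2 ^ i - 1) * bernoulli i
      = ∑ j ∈ range (M + 1), (n.choose (2 * j) : ℚ) * (2 ^ (2 * j) - 1) * bernoulli (2 * j)
        + ∑ j ∈ range (M + 1),
            (n.choose (2 * j + 1) : ℚ) * (2 ^ (2 * j + 1) - 1) * bernoulli (2 * j + 1) := by
    have : n + 1 = 2 * (M + 1) := by omega
    rw [this, sum_range_double]
  have hodd : ∑ j ∈ range (M + 1),
      (n.choose (2 * j + 1) : ℚ) * (2 ^ (2 * j + 1) - 1) * bernoulli (2 * j + 1)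
        = -(n : ℚ) / 2 := by
    rw [Finset.sum_range_succ']
    have hz : ∀ i ∈ range M, (n.choose (2 * (i + 1) + 1) : ℚ)
        * (2 ^ (2 * (i + 1) + 1) - 1) * bernoulli (2 * (i + 1) + 1) = 0 := by
      intro i _
      rw [bernoulli_odd_zero (by omega)]
      ring
    rw [Finset.sum_congr rfl hz, Finset.sum_const_zero]
    norm_num [bernoulli_one]
    ring
  have heven : ∑ j ∈ range (M + 1), (n.choose (2 * j) : ℚ) * (2 ^ (2 * j) - 1) * bernoulli (2 * j)
      = ∑ j ∈ Icc 1 M, (n.choose (2 * j) : ℚ) * (2 ^ (2 * j) - 1) * bernoulli (2 * j) := by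
    rw [Finset.sum_range_succ', ← Finset.Ico_add_one_right_eq_Icc, Finset.sum_Ico_eq_sum_range]
    norm_num [add_comm]
  rw [hsplit, hodd, heven] at hD
  have : ((n : ℕ) : ℚ) = 2 * M + 1 := by push_cast [hn]; ring
  rw [this] at hD
  linarith [hD]

lemma jform (M : ℕ) (hM : 1 ≤ M) :
    ∑ k ∈ Icc 1 M, ((2 ^ (2 * (M - k) + 2) - 1) * bernoulli (2 * (M - k) + 2))
        / (((2 * k - 1)! : ℚ) * ((2 * (M - k) + 2)! : ℚ))
      = 1 / (2 * ((2 * M)! : ℚ)) := by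
  have hne : ∀ m : ℕ, (m ! : ℚ) ≠ 0 := fun m => mod_cast factorial_ne_zero m
  have hswap : ∑ k ∈ Icc 1 M, ((2 ^ (2 * (M - k) + 2) - 1) * bernoulli (2 * (M - k) + 2))
        / (((2 * k - 1)! : ℚ) * ((2 * (M - k) + 2)! : ℚ))
      = ∑ j ∈ Icc 1 M, ((2 ^ (2 * j) - 1) * bernoulli (2 * j))
        / (((2 * M + 1 - 2 * j)! : ℚ) * ((2 * j)! : ℚ)) := by
    refine Finset.sum_nbij' (fun k => M + 1 - k) (fun j => M + 1 - j) ?_ ?_ ?_ ?_ ?_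
    · intro a ha; rw [mem_Icc] at *; omega
    · intro a ha; rw [mem_Icc] at *; omega
    · intro a ha; rw [mem_Icc] at ha; omega
    · intro a ha; rw [mem_Icc] at ha; omega
    · intro a ha
      rw [mem_Icc] at ha
      have h1 : 2 * (M - a) + 2 = 2 * (M + 1 - a) := by omega
      have h2 : 2 * a - 1 = 2 * M + 1 - 2 * (M + 1 - a) := by omega
      rw [h1, h2]
  rw [hswap]
  have hterm : ∀ j ∈ Icc 1 M, ((2 ^ (2 * j) - 1) * bernoulli (2 * j))
        / (((2 * M + 1 - 2 * j)! : ℚ) * ((2 * j)! : ℚ))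
      = ((2 * M + 1).choose (2 * j) : ℚ) * (2 ^ (2 * j) - 1) * bernoulli (2 * j)
        / ((2 * M + 1)! : ℚ) := by
    intro j hj
    rw [mem_Icc] at hj
    rw [Nat.cast_choose ℚ (by omega : 2 * j ≤ 2 * M + 1)]
    field_simp
  rw [Finset.sum_congr rfl hterm, ← Finset.sum_div, core M hM]
  have hfac : ((2 * M + 1)! : ℚ) = (2 * M + 1) * ((2 * M)! : ℚ) := by
    rw [show 2 * M + 1 = (2 * M) + 1 from rfl, Nat.factorial_succ]
    push_cast
    ring
  rw [hfac]
  have : ((2:ℚ) * M + 1) ≠ 0 := by positivity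
  field_simp

lemma qfinal (m r : ℕ) (hr : r < m) :
    ∑ k ∈ Icc (r + 1) m, (((2 * k - 1).choose (2 * r) : ℚ)
        * ((2 ^ (2 * (m - k) + 2) - 1) * bernoulli (2 * (m - k) + 2))
        / (((2 * k - 1)! : ℚ) * ((2 * (m - k) + 2)! : ℚ)))
      = ((2 * m).choose (2 * r) : ℚ) / (2 * ((2 * m)! : ℚ)) := by
  have hne : ∀ p : ℕ, (p ! : ℚ) ≠ 0 := fun p => mod_cast factorial_ne_zero p
  set M := m - r with hMdef
  have hM : 1 ≤ M := by omega
  have hswap : ∑ k ∈ Icc (r + 1) m, (((2 * k - 1).choose (2 * r) : ℚ)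
        * ((2 ^ (2 * (m - k) + 2) - 1) * bernoulli (2 * (m - k) + 2))
        / (((2 * k - 1)! : ℚ) * ((2 * (m - k) + 2)! : ℚ)))
      = ∑ k' ∈ Icc 1 M, (1 / ((2 * r)! : ℚ))
        * (((2 ^ (2 * (M - k') + 2) - 1) * bernoulli (2 * (M - k') + 2))
          / (((2 * k' - 1)! : ℚ) * ((2 * (M - k') + 2)! : ℚ))) := by
    refine Finset.sum_nbij' (fun k => k - r) (fun k' => k' + r) ?_ ?_ ?_ ?_ ?_
    · intro a ha; rw [mem_Icc] at *; omega
    · intro a ha; rw [mem_Icc] at *; omega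
    · intro a ha; rw [mem_Icc] at ha; omega
    · intro a ha; rw [mem_Icc] at ha; omega
    · intro k hk
      rw [mem_Icc] at hk
      have e1 : 2 * (m - k) + 2 = 2 * (M - (k - r)) + 2 := by omega
      have h2r : 2 * r ≤ 2 * k - 1 := by omega
      rw [e1, Nat.cast_choose ℚ h2r, show 2 * k - 1 - 2 * r = 2 * (k - r) - 1 by omega]
      field_simp
  rw [hswap, ← Finset.mul_sum, jform M hM, Nat.cast_choose ℚ (by omega : 2 * r ≤ 2 * m),
    show 2 * m - 2 * r = 2 * M by omega]
  have h1 : ((2 * m)! : ℚ) ≠ 0 := hne _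
  field_simp

lemma lambda_closed (j : ℕ) (hj : j ≠ 0) :
    dirichletLambda (2 * j) = (-1 : ℝ) ^ (j + 1) * (2 ^ (2 * j) - 1) * π ^ (2 * j)
      * (bernoulli (2 * j) : ℝ) / (2 * ((2 * j)! : ℝ)) := by
  set Z : ℝ := (-1 : ℝ) ^ (j + 1) * 2 ^ (2 * j - 1) * π ^ (2 * j)
      * (bernoulli (2 * j) : ℝ) / (2 * j)! with hZdef
  have hZ : HasSum (fun n : ℕ => 1 / (n : ℝ) ^ (2 * j)) Z := hasSum_zeta_nat hj
  have h4 : (4 : ℝ) ^ j = 2 ^ (2 * j) := by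
    rw [show (4 : ℝ) = 2 ^ 2 by norm_num, ← pow_mul]
  have heven : HasSum (fun n : ℕ => 1 / ((2 * n : ℝ)) ^ (2 * j)) ((1 / 4 ^ j) * Z) := by
    have := hZ.mul_left (1 / 4 ^ j)
    convert this using 2 with n
    · rfl
    rw [mul_pow, ← h4, one_div, one_div, one_div, mul_inv]
  have hodd_summable : Summable (fun n : ℕ => 1 / (2 * (n : ℝ) + 1) ^ (2 * j)) := by
    have hinj : Function.Injective (fun n : ℕ => 2 * n + 1) := fun a b h => by
      dsimp only at h; omega
    have h2 := hZ.summable.comp_injective hinj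
    refine h2.congr fun n => ?_
    simp only [Function.comp_apply]
    push_cast
    ring_nf
  have hodd : HasSum (fun n : ℕ => 1 / (2 * (n : ℝ) + 1) ^ (2 * j))
      (dirichletLambda (2 * j)) := hodd_summable.hasSum
  have htot : HasSum (fun n : ℕ => 1 / (n : ℝ) ^ (2 * j))
      ((1 / 4 ^ j) * Z + dirichletLambda (2 * j)) := by
    refine HasSum.even_add_odd ?_ ?_
    · convert heven using 2 with n
      push_cast
      ring_nf
    · convert hodd using 2 with n
      push_cast
      ring_nf
  have hval : (1 / 4 ^ j) * Z + dirichletLambda (2 * j) = Z := htot.unique hZ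
  have h2j : (2 : ℝ) ^ (2 * j) = 2 ^ (2 * j - 1) * 2 := by
    rw [← pow_succ, show 2 * j - 1 + 1 = 2 * j by omega]
  have hfne : ((2 * j)! : ℝ) ≠ 0 := by exact_mod_cast (Nat.factorial_ne_zero _)
  have h4ne : (4 : ℝ) ^ j ≠ 0 := by positivity
  rw [eq_sub_of_add_eq' hval, hZdef, h4, h2j]
  field_simp

lemma expand_odd (α : ℂ) (k : ℕ) (hk : 1 ≤ k) :
    (α - 1) ^ (2 * k - 1) - (α + 1) ^ (2 * k - 1)
      = -2 * ∑ r ∈ range k, ((2 * k - 1).choose (2 * r) : ℂ) * α ^ (2 * r) := by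
  set n := 2 * k - 1 with hn
  have h1 : (α + 1) ^ n = ∑ i ∈ range (n + 1), α ^ i * (n.choose i : ℂ) := by
    rw [add_pow]
    exact Finset.sum_congr rfl fun i _ => by rw [one_pow, mul_one]
  have h2 : (α - 1) ^ n = ∑ i ∈ range (n + 1), α ^ i * (-1 : ℂ) ^ (n - i) * (n.choose i : ℂ) := by
    rw [sub_eq_add_neg, add_pow]
  rw [h1, h2, ← Finset.sum_sub_distrib, show n + 1 = 2 * k by omega, sum_range_double]
  have hev : ∀ r ∈ range k,
      α ^ (2 * r) * (-1 : ℂ) ^ (n - 2 * r) * (n.choose (2 * r) : ℂ)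
        - α ^ (2 * r) * (n.choose (2 * r) : ℂ)
      = -2 * (α ^ (2 * r) * (n.choose (2 * r) : ℂ)) := by
    intro r hr
    rw [mem_range] at hr
    have hodd : Odd (n - 2 * r) := ⟨k - r - 1, by omega⟩
    rw [hodd.neg_one_pow]
    ring
  have hob : ∀ r ∈ range k,
      α ^ (2 * r + 1) * (-1 : ℂ) ^ (n - (2 * r + 1)) * (n.choose (2 * r + 1) : ℂ)
        - α ^ (2 * r + 1) * (n.choose (2 * r + 1) : ℂ) = 0 := by
    intro r hr
    rw [mem_range] at hr
    have hev2 : Even (n - (2 * r + 1)) := ⟨k - r - 1, by omega⟩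
    rw [hev2.neg_one_pow]
    ring
  rw [Finset.sum_congr rfl hev, Finset.sum_congr rfl hob, Finset.sum_const_zero, add_zero,
    ← Finset.mul_sum]
  congr 1
  exact Finset.sum_congr rfl fun r _ => by ring

lemma expand_even (α : ℂ) (m : ℕ) :
    (α - 1) ^ (2 * m) + (α + 1) ^ (2 * m) - 2 * α ^ (2 * m)
      = 2 * ∑ r ∈ range m, ((2 * m).choose (2 * r) : ℂ) * α ^ (2 * r) := by
  set n := 2 * m with hn
  have h1 : (α + 1) ^ n = ∑ i ∈ range (n + 1), α ^ i * (n.choose i : ℂ) := by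
    rw [add_pow]
    exact Finset.sum_congr rfl fun i _ => by rw [one_pow, mul_one]
  have h2 : (α - 1) ^ n = ∑ i ∈ range (n + 1), α ^ i * (-1 : ℂ) ^ (n - i) * (n.choose i : ℂ) := by
    rw [sub_eq_add_neg, add_pow]
  rw [h1, h2, ← Finset.sum_add_distrib, show n + 1 = 2 * m + 1 by omega, sum_range_double_succ]
  have hev : ∀ r ∈ range (m + 1),
      α ^ (2 * r) * (-1 : ℂ) ^ (n - 2 * r) * (n.choose (2 * r) : ℂ)
        + α ^ (2 * r) * (n.choose (2 * r) : ℂ)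
      = 2 * (α ^ (2 * r) * (n.choose (2 * r) : ℂ)) := by
    intro r hr
    rw [mem_range] at hr
    have he : Even (n - 2 * r) := ⟨m - r, by omega⟩
    rw [he.neg_one_pow]
    ring
  have hob : ∀ r ∈ range m,
      α ^ (2 * r + 1) * (-1 : ℂ) ^ (n - (2 * r + 1)) * (n.choose (2 * r + 1) : ℂ)
        + α ^ (2 * r + 1) * (n.choose (2 * r + 1) : ℂ) = 0 := by
    intro r hr
    rw [mem_range] at hr
    have ho : Odd (n - (2 * r + 1)) := ⟨m - r - 1, by omega⟩
    rw [ho.neg_one_pow]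
    ring
  rw [Finset.sum_congr rfl hev, Finset.sum_congr rfl hob, Finset.sum_const_zero, add_zero,
    Finset.sum_range_succ, Nat.choose_self, hn]
  push_cast
  rw [Finset.mul_sum]
  have hc : ∀ r ∈ range m, (2:ℂ) * (((2 * m).choose (2 * r) : ℂ) * α ^ (2 * r))
      = 2 * (α ^ (2 * r) * ((2 * m).choose (2 * r) : ℂ)) := fun r _ => by ring
  rw [Finset.sum_congr rfl hc]
  ring

lemma tri_swap (F : ℕ → ℕ → ℂ) (m : ℕ) :
    ∑ k ∈ Icc 1 m, ∑ r ∈ range k, F k r = ∑ r ∈ range m, ∑ k ∈ Icc (r + 1) m, F k r := by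
  induction m with
  | zero => simp
  | succ m ih =>
    rw [Finset.sum_Icc_succ_top (by omega), ih]
    have hin : ∀ r ∈ range (m + 1), ∑ k ∈ Icc (r + 1) (m + 1), F k r
        = (∑ k ∈ Icc (r + 1) m, F k r) + F (m + 1) r := by
      intro r hr
      rw [mem_range] at hr
      exact Finset.sum_Icc_succ_top (by omega) _
    rw [Finset.sum_congr rfl hin, Finset.sum_add_distrib,
      Finset.sum_range_succ (fun r => ∑ k ∈ Icc (r + 1) m, F k r),
      show Icc (m + 1) m = ∅ from Finset.Icc_eq_empty (by omega), Finset.sum_empty, add_zero]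

end AuxLemmas

theorem lambda_recurrence_family_second_even (m : ℕ) (hm : 0 < m) (α : ℂ) :
    (-1 : ℂ) ^ m * ((π : ℂ) ^ (2 * m + 2) / (4 * (Nat.factorial (2 * m)))) *
        ((α - 1) ^ (2 * m) + (α + 1) ^ (2 * m) - 2 * α ^ (2 * m)) +
      ∑ k ∈ Finset.Icc 1 m,
        (-1 : ℂ) ^ k * ((α - 1) ^ (2 * k - 1) - (α + 1) ^ (2 * k - 1)) *
          ((π : ℂ) ^ (2 * k) / (Nat.factorial (2 * k - 1))) *
            (dirichletLambda (2 * m - 2 * k + 2) : ℂ) = 0 := by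
  have hsummand : ∀ k ∈ Icc 1 m,
      (-1 : ℂ) ^ k * ((α - 1) ^ (2 * k - 1) - (α + 1) ^ (2 * k - 1)) *
          ((π : ℂ) ^ (2 * k) / (Nat.factorial (2 * k - 1))) *
            (dirichletLambda (2 * m - 2 * k + 2) : ℂ)
      = (-1 : ℂ) ^ m * (π : ℂ) ^ (2 * m + 2) *
          (((α - 1) ^ (2 * k - 1) - (α + 1) ^ (2 * k - 1)) *
            (((2 : ℂ) ^ (2 * (m - k) + 2) - 1) * ((bernoulli (2 * (m - k) + 2) : ℚ) : ℂ)
              / (2 * (((2 * k - 1)! : ℕ) : ℂ) * (((2 * (m - k) + 2)! : ℕ) : ℂ)))) := by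
    intro k hk
    rw [mem_Icc] at hk
    have hj : 2 * m - 2 * k + 2 = 2 * (m - k + 1) := by omega
    rw [hj, lambda_closed (m - k + 1) (by omega),
      show 2 * (m - k + 1) = 2 * (m - k) + 2 by omega]
    push_cast
    have hprod : ((-1 : ℂ) ^ k * (π : ℂ) ^ (2 * k)) *
        ((-1 : ℂ) ^ (m - k + 1 + 1) * (π : ℂ) ^ (2 * (m - k) + 2))
        = (-1 : ℂ) ^ m * (π : ℂ) ^ (2 * m + 2) := by
      rw [mul_mul_mul_comm, ← pow_add, ← pow_add, show k + (m - k + 1 + 1) = m + 2 by omega,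
        show 2 * k + (2 * (m - k) + 2) = 2 * m + 2 by omega, pow_add]
      norm_num
    linear_combination (((α - 1) ^ (2 * k - 1) - (α + 1) ^ (2 * k - 1)) *
      (((2 : ℂ) ^ (2 * (m - k) + 2) - 1) * ((bernoulli (2 * (m - k) + 2) : ℚ) : ℂ))
      / (2 * (((2 * k - 1)! : ℕ) : ℂ) * (((2 * (m - k) + 2)! : ℕ) : ℂ))) * hprod
  rw [Finset.sum_congr rfl hsummand, ← Finset.mul_sum]
  have key : ((α - 1) ^ (2 * m) + (α + 1) ^ (2 * m) - 2 * α ^ (2 * m))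
        / (4 * (((2 * m)! : ℕ) : ℂ))
      + ∑ k ∈ Icc 1 m, (((α - 1) ^ (2 * k - 1) - (α + 1) ^ (2 * k - 1)) *
          (((2 : ℂ) ^ (2 * (m - k) + 2) - 1) * ((bernoulli (2 * (m - k) + 2) : ℚ) : ℂ)
            / (2 * (((2 * k - 1)! : ℕ) : ℂ) * (((2 * (m - k) + 2)! : ℕ) : ℂ)))) = 0 := by
    have hDk : ∀ k ∈ Icc 1 m, ((α - 1) ^ (2 * k - 1) - (α + 1) ^ (2 * k - 1)) *
        (((2 : ℂ) ^ (2 * (m - k) + 2) - 1) * ((bernoulli (2 * (m - k) + 2) : ℚ) : ℂ)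
          / (2 * (((2 * k - 1)! : ℕ) : ℂ) * (((2 * (m - k) + 2)! : ℕ) : ℂ)))
        = ∑ r ∈ range k, (-2 * (((2 * k - 1).choose (2 * r) : ℕ) : ℂ) * α ^ (2 * r) *
            (((2 : ℂ) ^ (2 * (m - k) + 2) - 1) * ((bernoulli (2 * (m - k) + 2) : ℚ) : ℂ)
              / (2 * (((2 * k - 1)! : ℕ) : ℂ) * (((2 * (m - k) + 2)! : ℕ) : ℂ)))) := by
      intro k hk
      rw [mem_Icc] at hk
      rw [expand_odd α k hk.1, Finset.mul_sum, Finset.sum_mul]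
      exact Finset.sum_congr rfl fun r _ => by ring
    rw [Finset.sum_congr rfl hDk, tri_swap, expand_even α m]
    have h1 : 2 * (∑ r ∈ range m, ((2 * m).choose (2 * r) : ℂ) * α ^ (2 * r))
        / (4 * (((2 * m)! : ℕ) : ℂ))
        = ∑ r ∈ range m, (((2 * m).choose (2 * r) : ℕ) : ℂ) * α ^ (2 * r)
            / (2 * (((2 * m)! : ℕ) : ℂ)) := by
      rw [Finset.mul_sum, Finset.sum_div]
      exact Finset.sum_congr rfl fun r _ => by ring
    rw [h1, ← Finset.sum_add_distrib]
    apply Finset.sum_eq_zero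
    intro r hr
    rw [mem_range] at hr
    have hq := congrArg (fun q : ℚ => (q : ℂ)) (qfinal m r hr)
    push_cast at hq
    have hterm : ∀ k ∈ Icc (r + 1) m,
        -2 * (((2 * k - 1).choose (2 * r) : ℕ) : ℂ) * α ^ (2 * r) *
          (((2 : ℂ) ^ (2 * (m - k) + 2) - 1) * ((bernoulli (2 * (m - k) + 2) : ℚ) : ℂ)
            / (2 * (((2 * k - 1)! : ℕ) : ℂ) * (((2 * (m - k) + 2)! : ℕ) : ℂ)))
        = -α ^ (2 * r) * ((((2 * k - 1).choose (2 * r) : ℕ) : ℂ) *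
            (((2 : ℂ) ^ (2 * (m - k) + 2) - 1) * ((bernoulli (2 * (m - k) + 2) : ℚ) : ℂ))
            / ((((2 * k - 1)! : ℕ) : ℂ) * (((2 * (m - k) + 2)! : ℕ) : ℂ))) := by
      intro k _
      ring
    rw [Finset.sum_congr rfl hterm, ← Finset.mul_sum, hq]
    ring
  linear_combination ((-1 : ℂ) ^ m * (π : ℂ) ^ (2 * m + 2)) * key
end

section
/- Let m be a nonnegative integer and let α be a complex number. Then (-1)^m · π^{2m+2}/(4·(2m+1)!) · ( (α-1)^{2m+1} - (α+1)^{2m+1} ) + Σ_{k=0}^{m} (-1)^k ( (α-1)^{2k} + (α+1)^{2k} + 2α^{2k} ) · π^{2k}/(2k)! · λ(2m-2k+2) = 0, where 0^0 is interpreted as 1. -/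
open Real Finset

section EulAux

open PowerSeries Nat

noncomputable def eul (j : ℕ) : ℚ := 2 * (1 - 2 ^ (j + 1)) * bernoulli (j + 1) / (j + 1)

lemma eul_zero : eul 0 = 1 := by norm_num [eul, bernoulli_one]

lemma eul_even (i : ℕ) (hi : i ≠ 0) : eul (2 * i) = 0 := by
  have hodd : Odd (2 * i + 1) := ⟨i, by ring⟩
  have h1 : (2 * i + 1) ≠ 1 := by omega
  rw [eul, bernoulli_eq_bernoulli'_of_ne_one h1,
    bernoulli'_eq_zero_of_odd hodd (by omega)]
  simp

noncomputable def eulG : PowerSeries ℚ := PowerSeries.mk fun j => eul j / j !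

lemma coeff_eulG (j : ℕ) : (coeff j) eulG = eul j / j ! := by simp [eulG]

lemma X_mul_eulG :
    (X : PowerSeries ℚ) * eulG =
      C 2 * (bernoulliPowerSeries ℚ - rescale 2 (bernoulliPowerSeries ℚ)) := by
  have hB : ∀ n, (coeff n) (bernoulliPowerSeries ℚ) = bernoulli n / n ! := by
    intro n; simp [bernoulliPowerSeries]
  ext n
  rw [coeff_C_mul, map_sub, coeff_rescale, hB]
  cases n with
  | zero => simp
  | succ d =>
    rw [coeff_succ_X_mul, coeff_eulG, eul]
    have h1 : ((d : ℚ) + 1) ≠ 0 := by positivity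
    have h2 : ((d ! : ℚ)) ≠ 0 := by exact_mod_cast Nat.factorial_ne_zero d
    have h4 : (((d + 1)! : ℚ)) = ((d : ℚ) + 1) * d ! := by
      rw [Nat.factorial_succ]; push_cast; ring
    rw [h4]
    push_cast
    field_simp

lemma exp_sq : (exp ℚ) ^ 2 = rescale (2 : ℚ) (exp ℚ) := by
  have := exp_pow_eq_rescale_exp (A := ℚ) 2
  simpa using this

lemma key_ps : (exp ℚ + 1) * eulG = C 2 := by
  have hexp1 : (exp ℚ - 1 : PowerSeries ℚ) ≠ 0 := by
    intro h
    have := congrArg (coeff 1) h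
    simp [coeff_exp] at this
  have hX : ((exp ℚ - 1) * X : PowerSeries ℚ) ≠ 0 := mul_ne_zero hexp1 X_ne_zero
  apply mul_right_cancel₀ hX
  have hresc : rescale (2:ℚ) (bernoulliPowerSeries ℚ * (exp ℚ - 1)) = rescale 2 X :=
    congrArg _ (bernoulliPowerSeries_mul_exp_sub_one ℚ)
  rw [map_mul, map_sub, map_one, ← exp_sq, rescale_X] at hresc
  calc (exp ℚ + 1) * eulG * ((exp ℚ - 1) * X)
      = ((exp ℚ)^2 - 1) * (X * eulG) := by ring
    _ = ((exp ℚ)^2 - 1) * (C 2 * (bernoulliPowerSeries ℚ - rescale 2 (bernoulliPowerSeries ℚ))) := by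
        rw [X_mul_eulG]
    _ = C 2 * ((exp ℚ + 1) * (bernoulliPowerSeries ℚ * (exp ℚ - 1))
          - rescale 2 (bernoulliPowerSeries ℚ) * ((exp ℚ)^2 - 1)) := by ring
    _ = C 2 * ((exp ℚ + 1) * X - C 2 * X) := by
        rw [bernoulliPowerSeries_mul_exp_sub_one, hresc]
    _ = C 2 * ((exp ℚ - 1) * X) := by
        have : (C 2 : PowerSeries ℚ) = 1 + 1 := by
          rw [show (2:ℚ) = 1 + 1 by norm_num, map_add, map_one]
        rw [this]; ring

lemma eul_rec (d : ℕ) (hd : d ≠ 0) :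
    (∑ j ∈ range (d + 1), (d.choose j : ℚ) * eul j) + eul d = 0 := by
  have h := congrArg (coeff d) key_ps
  rw [coeff_mul, coeff_C, if_neg hd, Finset.Nat.sum_antidiagonal_eq_sum_range_succ_mk] at h
  have h2 : ∀ p ∈ range (d + 1),
      (coeff p) (exp ℚ + 1) * (coeff (d - p)) eulG
        = (1 / p !) * (eul (d - p) / (d - p)!) + (if p = 0 then eul d / d ! else 0) := by
    intro p hp
    rw [map_add, coeff_exp, coeff_one, coeff_eulG]
    rcases eq_or_ne p 0 with rfl | hp0
    · simp; ring
    · simp [hp0]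
  rw [Finset.sum_congr rfl h2, Finset.sum_add_distrib, Finset.sum_ite_eq'
    (range (d+1)) 0 (fun _ => eul d / d !)] at h
  simp only [Finset.mem_range, Nat.lt_add_one_iff, Nat.zero_le, if_pos] at h
  -- h : ∑ p in range (d+1), 1/p! * (eul (d-p)/(d-p)!) + eul d / d! = 0
  have h3 := congrArg (fun z => (d ! : ℚ) * z) h
  simp only [mul_zero, mul_add, Finset.mul_sum] at h3
  have hd2 : ((d ! : ℚ)) ≠ 0 := by exact_mod_cast Nat.factorial_ne_zero d
  rw [mul_div_cancel₀ _ hd2] at h3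
  rw [← h3]
  congr 1
  conv_rhs => rw [← Finset.sum_range_reflect]
  refine Finset.sum_congr rfl fun j hj => ?_
  simp only [Finset.mem_range, Nat.lt_add_one_iff] at hj
  simp only [Nat.add_sub_cancel]
  have h5 : d - (d - j) = j := by omega
  rw [h5, Nat.cast_choose ℚ hj]
  have hj1 : ((j ! : ℚ)) ≠ 0 := by exact_mod_cast Nat.factorial_ne_zero j
  have hj2 : (((d - j)! : ℚ)) ≠ 0 := by exact_mod_cast Nat.factorial_ne_zero (d - j)
  field_simp

lemma choose_swap {n i j : ℕ} (hj : j ≤ n) :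
    n.choose j * (n - j).choose i = n.choose i * (n - i).choose j := by
  by_cases h : i ≤ n - j
  · have h1 := Nat.choose_mul (n := n) h
    rw [Nat.choose_symm hj] at h1
    rw [h1]
    congr 1
    have h2 : j ≤ n - i := by omega
    rw [show (n - j) - i = (n - i) - j by omega, Nat.choose_symm h2]
  · have h1 : (n - j).choose i = 0 := Nat.choose_eq_zero_of_lt (by omega)
    by_cases h2 : i ≤ n
    · have h3 : (n - i).choose j = 0 := Nat.choose_eq_zero_of_lt (by omega)
      rw [h1, h3, mul_zero, mul_zero]
    · have h3 : n.choose i = 0 := Nat.choose_eq_zero_of_lt (by omega)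
      rw [h1, h3, mul_zero, zero_mul]

lemma eulP (n : ℕ) (x : ℂ) :
    ∑ j ∈ range (n + 1), (n.choose j : ℂ) * (eul j : ℂ) * ((x + 1) ^ (n - j) + x ^ (n - j))
      = 2 * x ^ n := by
  -- expand (x+1)^(n-j)
  have hexp : ∀ j, j ≤ n → (x + 1) ^ (n - j)
      = ∑ i ∈ range (n + 1), ((n - j).choose i : ℂ) * x ^ i := by
    intro j hj
    rw [add_pow]
    simp only [one_pow, mul_one]
    rw [Finset.sum_subset (Finset.range_subset_range.2 (by omega : n - j + 1 ≤ n + 1))]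
    · exact Finset.sum_congr rfl fun i _ => by ring
    · intro i hi hni
      simp only [Finset.mem_range] at hi hni
      rw [Nat.choose_eq_zero_of_lt (by omega)]
      simp
  have step1 : ∑ j ∈ range (n + 1), (n.choose j : ℂ) * (eul j : ℂ) * (x + 1) ^ (n - j)
      = ∑ i ∈ range (n + 1), ((n.choose i : ℂ) *
          (∑ j ∈ range (n + 1), ((n - i).choose j : ℂ) * (eul j : ℂ))) * x ^ i := by
    rw [Finset.sum_congr rfl (fun j hj => by
      rw [hexp j (by simpa [Nat.lt_add_one_iff] using hj), Finset.mul_sum])]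
    rw [Finset.sum_comm]
    refine Finset.sum_congr rfl fun i hi => ?_
    conv_rhs => rw [Finset.mul_sum, Finset.sum_mul]
    refine Finset.sum_congr rfl fun j hj => ?_
    simp only [Finset.mem_range, Nat.lt_add_one_iff] at hi hj
    have hcs : (n.choose j : ℂ) * ((n - j).choose i : ℂ)
        = (n.choose i : ℂ) * ((n - i).choose j : ℂ) := by
      exact_mod_cast congrArg (fun t : ℕ => (t : ℂ)) (choose_swap hj)
    calc (n.choose j : ℂ) * (eul j : ℂ) * (((n - j).choose i : ℂ) * x ^ i)
        = ((n.choose j : ℂ) * ((n - j).choose i : ℂ)) * (eul j : ℂ) * x ^ i := by ring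
      _ = ((n.choose i : ℂ) * ((n - i).choose j : ℂ)) * (eul j : ℂ) * x ^ i := by rw [hcs]
      _ = (n.choose i : ℂ) * (((n - i).choose j : ℂ) * (eul j : ℂ)) * x ^ i := by ring
  have step2 : ∀ i, i ≤ n →
      ∑ j ∈ range (n + 1), ((n - i).choose j : ℂ) * (eul j : ℂ)
        = ∑ j ∈ range (n - i + 1), ((n - i).choose j : ℂ) * (eul j : ℂ) := by
    intro i hi
    rw [Finset.sum_subset (Finset.range_subset_range.2 (by omega : n - i + 1 ≤ n + 1))]
    intro j hj hnj
    simp only [Finset.mem_range] at hj hnj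
    rw [Nat.choose_eq_zero_of_lt (by omega)]
    simp
  have hq : ∀ i, i ≤ n →
      ∑ j ∈ range (n - i + 1), ((n - i).choose j : ℂ) * (eul j : ℂ)
        = ((∑ j ∈ range (n - i + 1), ((n - i).choose j : ℚ) * eul j : ℚ) : ℂ) := by
    intro i _; push_cast; ring
  have step3 : ∑ j ∈ range (n + 1), (n.choose j : ℂ) * (eul j : ℂ) * x ^ (n - j)
      = ∑ i ∈ range (n + 1), (n.choose i : ℂ) * (eul (n - i) : ℂ) * x ^ i := by
    conv_lhs => rw [← Finset.sum_range_reflect]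
    refine Finset.sum_congr rfl fun i hi => ?_
    simp only [Finset.mem_range, Nat.lt_add_one_iff] at hi
    simp only [Nat.add_sub_cancel]
    rw [show n - (n - i) = i by omega, Nat.choose_symm (by omega)]
  have split : ∑ j ∈ range (n + 1), (n.choose j : ℂ) * (eul j : ℂ) *
        ((x + 1) ^ (n - j) + x ^ (n - j))
      = (∑ j ∈ range (n + 1), (n.choose j : ℂ) * (eul j : ℂ) * (x + 1) ^ (n - j))
        + ∑ j ∈ range (n + 1), (n.choose j : ℂ) * (eul j : ℂ) * x ^ (n - j) := by
    rw [← Finset.sum_add_distrib]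
    exact Finset.sum_congr rfl fun j _ => by ring
  rw [split, step1, step3, ← Finset.sum_add_distrib]
  rw [Finset.sum_eq_single_of_mem n (Finset.self_mem_range_succ n)]
  · rw [step2 n le_rfl]
    simp [Nat.sub_self, eul_zero]
    ring
  · intro i hi hin
    simp only [Finset.mem_range, Nat.lt_add_one_iff] at hi
    rw [step2 i hi, hq i hi]
    have h0 : n - i ≠ 0 := by omega
    have hr := eul_rec (n - i) h0
    have hQ : (∑ j ∈ range (n - i + 1), ((n - i).choose j : ℚ) * eul j) = - eul (n - i) := by
      linarith [hr]
    rw [hQ]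
    push_cast
    ring

lemma sum_pair (f : ℕ → ℂ) (N : ℕ) :
    ∑ j ∈ range (2 * N), f j = ∑ i ∈ range N, (f (2 * i) + f (2 * i + 1)) := by
  induction N with
  | zero => simp
  | succ N ih =>
    rw [Finset.sum_range_succ, ← ih, show 2 * (N + 1) = (2 * N + 1) + 1 by ring,
      Finset.sum_range_succ, Finset.sum_range_succ]
    ring

lemma idB (m : ℕ) (α : ℂ) :
    ∑ k ∈ range (m + 1), (((2 * m + 1).choose (2 * k) : ℂ)) * (eul (2 * (m - k) + 1) : ℂ) *
        ((α - 1) ^ (2 * k) + (α + 1) ^ (2 * k) + 2 * α ^ (2 * k))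
      = (α - 1) ^ (2 * m + 1) - (α + 1) ^ (2 * m + 1) := by
  set n := 2 * m + 1 with hn
  have hP1 := eulP n (α - 1)
  have hP2 := eulP n α
  rw [show α - 1 + 1 = α by ring] at hP1
  have hC : ∑ j ∈ range (n + 1), (n.choose j : ℂ) * (eul j : ℂ) *
        ((α - 1) ^ (n - j) + (α + 1) ^ (n - j) + 2 * α ^ (n - j))
      = 2 * (α - 1) ^ n + 2 * α ^ n := by
    rw [← hP1, ← hP2, ← Finset.sum_add_distrib]
    exact Finset.sum_congr rfl fun j _ => by ring
  rw [show n + 1 = 2 * (m + 1) by omega, sum_pair, Finset.sum_add_distrib] at hC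
  have hEvenPart : ∑ i ∈ range (m + 1), (n.choose (2 * i) : ℂ) * (eul (2 * i) : ℂ) *
        ((α - 1) ^ (n - 2 * i) + (α + 1) ^ (n - 2 * i) + 2 * α ^ (n - 2 * i))
      = (α - 1) ^ n + (α + 1) ^ n + 2 * α ^ n := by
    rw [Finset.sum_eq_single_of_mem 0 (Finset.mem_range.2 (Nat.succ_pos m))]
    · simp [eul_zero]
    · intro i _ hi
      rw [eul_even i hi]
      simp
  have hOddPart : ∑ i ∈ range (m + 1), (n.choose (2 * i + 1) : ℂ) * (eul (2 * i + 1) : ℂ) *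
        ((α - 1) ^ (n - (2 * i + 1)) + (α + 1) ^ (n - (2 * i + 1)) + 2 * α ^ (n - (2 * i + 1)))
      = ∑ k ∈ range (m + 1), (((2 * m + 1).choose (2 * k) : ℂ)) * (eul (2 * (m - k) + 1) : ℂ) *
        ((α - 1) ^ (2 * k) + (α + 1) ^ (2 * k) + 2 * α ^ (2 * k)) := by
    rw [← Finset.sum_range_reflect]
    refine Finset.sum_congr rfl fun k hk => ?_
    simp only [Finset.mem_range, Nat.lt_add_one_iff] at hk
    rw [show m + 1 - 1 - k = m - k by omega]
    rw [show n - (2 * (m - k) + 1) = 2 * k by omega]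
    rw [show n.choose (2 * (m - k) + 1) = n.choose (2 * k) by
      rw [show 2 * (m - k) + 1 = n - 2 * k by omega, Nat.choose_symm (by omega)]]
  rw [hEvenPart, hOddPart] at hC
  linear_combination hC

end EulAux

section LamAux
open PowerSeries Nat

lemma lam_eq (i : ℕ) :
    dirichletLambda (2 * (i + 1)) = (-1) ^ (i + 1) * π ^ (2 * (i + 1)) *
      ((eul (2 * i + 1) : ℚ) : ℝ) / (4 * (2 * i + 1)!) := by
  have hj : (i + 1) ≠ 0 := Nat.succ_ne_zero i
  have hfull := hasSum_zeta_nat hj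
  set S : ℝ := (-1 : ℝ) ^ (i + 1 + 1) * (2 : ℝ) ^ (2 * (i + 1) - 1) * π ^ (2 * (i + 1)) *
      bernoulli (2 * (i + 1)) / (2 * (i + 1))! with hS
  have heven' : HasSum (fun k : ℕ => 1 / ((2 * k : ℕ) : ℝ) ^ (2 * (i + 1)))
      (((2 : ℝ) ^ (2 * (i + 1)))⁻¹ * S) := by
    have h2 : ((2 : ℝ) ^ (2 * (i + 1))) ≠ 0 := by positivity
    refine (hfull.mul_left (((2 : ℝ) ^ (2 * (i + 1)))⁻¹)).congr_fun fun k => ?_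
    push_cast
    rw [mul_pow]
    field_simp
  have hodd_sum : Summable (fun k : ℕ => 1 / (2 * (k : ℝ) + 1) ^ (2 * (i + 1))) := by
    have h1 : Summable (fun k : ℕ => 1 / (((2 * k + 1 : ℕ) : ℝ)) ^ (2 * (i + 1))) :=
      hfull.summable.comp_injective (fun a b hab => by omega)
    refine h1.congr fun k => ?_
    push_cast
    ring_nf
  have hodd' : HasSum (fun k : ℕ => 1 / (((2 * k + 1 : ℕ)) : ℝ) ^ (2 * (i + 1)))
      (dirichletLambda (2 * (i + 1))) := by
    refine hodd_sum.hasSum.congr_fun fun k => ?_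
    push_cast
    ring_nf
  have hcomb : HasSum (fun n : ℕ => 1 / (n : ℝ) ^ (2 * (i + 1)))
      ((((2 : ℝ) ^ (2 * (i + 1)))⁻¹ * S) + dirichletLambda (2 * (i + 1))) :=
    HasSum.even_add_odd heven' hodd'
  have hval : dirichletLambda (2 * (i + 1)) = S - ((2 : ℝ) ^ (2 * (i + 1)))⁻¹ * S := by
    have := hfull.unique hcomb
    linarith
  rw [hval, hS, eul]
  rw [show 2 * (i + 1) - 1 = 2 * i + 1 from by omega,
    show 2 * (i + 1) = 2 * i + 2 from by ring]
  have hfac : ((2 * i + 2)! : ℝ) = ((2 * i + 2 : ℕ) : ℝ) * ((2 * i + 1)! : ℝ) := by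
    rw [show (2 * i + 2) = (2 * i + 1) + 1 by ring, Nat.factorial_succ]
    push_cast
    ring
  have h1 : ((2 * i + 1)! : ℝ) ≠ 0 := by positivity
  have h2 : ((2 : ℝ) ^ (2 * i + 2)) ≠ 0 := by positivity
  push_cast [hfac]
  rw [show (2 * i + 1 + 1) = 2 * i + 2 from by ring]
  field_simp
  ring

end LamAux

open Nat in
theorem lambda_recurrence_family_second_odd (m : ℕ) (α : ℂ) :
    (-1 : ℂ) ^ m * ((π : ℂ) ^ (2 * m + 2) / (4 * (Nat.factorial (2 * m + 1)))) *
        ((α - 1) ^ (2 * m + 1) - (α + 1) ^ (2 * m + 1)) +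
      ∑ k ∈ Finset.range (m + 1),
        (-1 : ℂ) ^ k * ((α - 1) ^ (2 * k) + (α + 1) ^ (2 * k) + 2 * α ^ (2 * k)) *
          ((π : ℂ) ^ (2 * k) / (Nat.factorial (2 * k))) *
            (dirichletLambda (2 * m - 2 * k + 2) : ℂ) = 0 := by
  have hsum : ∑ k ∈ Finset.range (m + 1),
        (-1 : ℂ) ^ k * ((α - 1) ^ (2 * k) + (α + 1) ^ (2 * k) + 2 * α ^ (2 * k)) *
          ((π : ℂ) ^ (2 * k) / (Nat.factorial (2 * k))) *
            (dirichletLambda (2 * m - 2 * k + 2) : ℂ)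
      = ∑ k ∈ Finset.range (m + 1),
          (-1 : ℂ) ^ (m + 1) * ((π : ℂ) ^ (2 * m + 2) / (4 * ((2 * m + 1)! : ℂ))) *
            ((((2 * m + 1).choose (2 * k) : ℂ)) * (eul (2 * (m - k) + 1) : ℂ) *
              ((α - 1) ^ (2 * k) + (α + 1) ^ (2 * k) + 2 * α ^ (2 * k))) := by
    refine Finset.sum_congr rfl fun k hk => ?_
    simp only [Finset.mem_range, Nat.lt_add_one_iff] at hk
    rw [show 2 * m - 2 * k + 2 = 2 * ((m - k) + 1) by omega, lam_eq (m - k)]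
    push_cast
    have e1 : (π : ℂ) ^ (2 * m + 2) = (π : ℂ) ^ (2 * k) * (π : ℂ) ^ (2 * (m - k + 1)) := by
      rw [← pow_add]; congr 1; omega
    have e2 : ((-1 : ℂ)) ^ (m + 1) = (-1 : ℂ) ^ k * (-1 : ℂ) ^ (m - k + 1) := by
      rw [← pow_add]; congr 1; omega
    have e4 : (((2 * m + 1).choose (2 * k) : ℂ))
        = ((2 * m + 1)! : ℂ) / (((2 * k)! : ℂ) * ((2 * (m - k) + 1)! : ℂ)) := by
      rw [Nat.cast_choose ℂ (show 2 * k ≤ 2 * m + 1 by omega),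
        show 2 * m + 1 - 2 * k = 2 * (m - k) + 1 from by omega]
    rw [e1, e2, e4]
    have h1 : (((2 * k)! : ℂ)) ≠ 0 := by exact_mod_cast Nat.factorial_ne_zero (2 * k)
    have h2 : (((2 * (m - k) + 1)! : ℂ)) ≠ 0 := by
      exact_mod_cast Nat.factorial_ne_zero (2 * (m - k) + 1)
    have h3 : (((2 * m + 1)! : ℂ)) ≠ 0 := by exact_mod_cast Nat.factorial_ne_zero (2 * m + 1)
    have e5 : ((m - k : ℕ) : ℂ) + 1 = ((m - k + 1 : ℕ) : ℂ) := by push_cast; ring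
    field_simp
  rw [hsum, ← Finset.mul_sum, idB]
  ring
end
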